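/- arXiv:2305.02999 — 6 statements merged into one kernel-verified Lean document; each statement's English description precedes it below -/
import Mathlib

section
/- Let χ₁ and χ₂ be orthonormal vectors in ℂ²⊗ℂ² (⟨χ₁, χ₂⟩ = 0, ‖χ₁‖ = ‖χ₂‖ = 1) such that Tr₁ |χ₁⟩⟨χ₁| = Tr₁ |χ₂⟩⟨χ₂| and Tr₂ |χ₁⟩⟨χ₁| = Tr₂ |χ₂⟩⟨χ₂|. Then both χ₁ and χ₂ are maximally entangled: Tr₁ |χᵢ⟩⟨χᵢ| = (1/2)·I₂ and Tr₂ |χᵢ⟩⟨χᵢ| = (1/2)·I₂ for i = 1, 2, where I₂ is the 2×2 identity matrix. That is, masking two orthogonal pure qubit states requires the masked states to be maximally entangled. -/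
open Matrix Kronecker Polynomial ComplexOrder

noncomputable section

/-- Partial trace over the first subsystem of a two-qubit (4×4) matrix. -/
def ptr1 (M : Matrix (Fin 2 × Fin 2) (Fin 2 × Fin 2) ℂ) : Matrix (Fin 2) (Fin 2) ℂ :=
  Matrix.of fun j l => ∑ i, M (i, j) (i, l)

/-- Partial trace over the second subsystem of a two-qubit (4×4) matrix. -/
def ptr2 (M : Matrix (Fin 2 × Fin 2) (Fin 2 × Fin 2) ℂ) : Matrix (Fin 2) (Fin 2) ℂ :=
  Matrix.of fun i k => ∑ j, M (i, j) (k, j)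

/-- Rank-one projection |v⟩⟨v| of a qubit vector. -/
def proj2 (v : Fin 2 → ℂ) : Matrix (Fin 2) (Fin 2) ℂ :=
  Matrix.of fun i j => v i * star (v j)

/-- Rank-one projection |v⟩⟨v| of a two-qubit vector. -/
def proj4 (v : Fin 2 × Fin 2 → ℂ) : Matrix (Fin 2 × Fin 2) (Fin 2 × Fin 2) ℂ :=
  Matrix.of fun p q => v p * star (v q)

/-- Kronecker (tensor) product of two qubit vectors. -/
def tens (a b : Fin 2 → ℂ) : Fin 2 × Fin 2 → ℂ := fun p => a p.1 * b p.2

/-- Unit (normalized) vector. -/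
def UnitVec {α : Type*} [Fintype α] (v : α → ℂ) : Prop := ∑ i, v i * star (v i) = 1

/-- Hermitian inner product of two-qubit vectors. -/
def inner4 (v w : Fin 2 × Fin 2 → ℂ) : ℂ := ∑ p, star (v p) * w p

/-- A 2×2 density matrix: positive semidefinite with unit trace. -/
def IsDensity2 (A : Matrix (Fin 2) (Fin 2) ℂ) : Prop := A.PosSemidef ∧ A.trace = 1

/-- Separability of a two-qubit density matrix: a finite convex combination of
Kronecker products of 2×2 density matrices. -/
def Separable4 (ρ : Matrix (Fin 2 × Fin 2) (Fin 2 × Fin 2) ℂ) : Prop :=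
  ∃ (n : ℕ) (w : Fin n → ℝ) (A B : Fin n → Matrix (Fin 2) (Fin 2) ℂ),
    (∀ i, 0 ≤ w i) ∧ (∑ i, w i = 1) ∧
    (∀ i, IsDensity2 (A i)) ∧ (∀ i, IsDensity2 (B i)) ∧
    ρ = ∑ i, (w i : ℂ) • (A i ⊗ₖ B i)

/-- Standard basis vector e₀ of ℂ². -/
def e₀ : Fin 2 → ℂ := ![1, 0]

/-- Standard basis vector e₁ of ℂ². -/
def e₁ : Fin 2 → ℂ := ![0, 1]


/-- Auxiliary: a 2×2 matrix `P` with `P * P = Sᴴ * S = S * Sᴴ` for a traceless `S`,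
and `trace P = 1`, must be `(1/2) • 1`. -/
private lemma key2 (P S : Matrix (Fin 2) (Fin 2) ℂ)
    (h1 : Sᴴ * S = P * P) (h2 : S * Sᴴ = P * P)
    (htS : S.trace = 0) (htP : P.trace = 1) :
    P = (1/2 : ℂ) • (1 : Matrix (Fin 2) (Fin 2) ℂ) := by
  rw [Matrix.trace_fin_two] at htS htP
  have htS' : S 1 1 = -(S 0 0) := by linear_combination htS
  have hstS' : star (S 1 1) = -(star (S 0 0)) := by rw [htS', star_neg]
  have hn : Sᴴ * S = S * Sᴴ := h1.trans h2.symm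
  have n01 : (Sᴴ * S) 0 1 = (S * Sᴴ) 0 1 := by rw [hn]
  have n10 : (Sᴴ * S) 1 0 = (S * Sᴴ) 1 0 := by rw [hn]
  simp only [Matrix.mul_apply, Matrix.conjTranspose_apply, Fin.sum_univ_two] at n01 n10
  have q01 : (P * P) 0 1 = 0 := by
    rw [← h1]
    simp only [Matrix.mul_apply, Matrix.conjTranspose_apply, Fin.sum_univ_two]
    linear_combination n01/2 + (star (S 1 0))/2 * htS' + (S 0 1)/2 * hstS'
  have q10 : (P * P) 1 0 = 0 := by
    rw [← h1]
    simp only [Matrix.mul_apply, Matrix.conjTranspose_apply, Fin.sum_univ_two]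
    linear_combination n10/2 + (S 1 0)/2 * hstS' + (star (S 0 1))/2 * htS'
  have qdiag : (P * P) 0 0 = (P * P) 1 1 := by
    have e : (Sᴴ * S) 0 0 = (S * Sᴴ) 1 1 := by
      simp only [Matrix.mul_apply, Matrix.conjTranspose_apply, Fin.sum_univ_two]
      linear_combination (star (S 0 0)) * htS' + (-(S 1 1)) * hstS'
    calc (P * P) 0 0 = (Sᴴ * S) 0 0 := by rw [h1]
      _ = (S * Sᴴ) 1 1 := e
      _ = (P * P) 1 1 := by rw [h2]
  simp only [Matrix.mul_apply, Fin.sum_univ_two] at q01 q10 qdiag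
  have p01 : P 0 1 = 0 := by linear_combination q01 - P 0 1 * htP
  have p10 : P 1 0 = 0 := by linear_combination q10 - P 1 0 * htP
  have h5 : (P 0 0 - P 1 1) * (P 0 0 + P 1 1) = 0 := by linear_combination qdiag
  have h6 : P 0 0 = P 1 1 := by linear_combination h5 - (P 0 0 - P 1 1) * htP
  have p00 : P 0 0 = 1/2 := by linear_combination h6/2 + htP/2
  have p11 : P 1 1 = 1/2 := by linear_combination -h6/2 + htP/2
  ext i j
  fin_cases i <;> fin_cases j <;>
    simp [p00, p01, p10, p11, Matrix.one_apply]

/-- The 2×2 matrix of a two-qubit vector. -/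
private def vmat (χ : Fin 2 × Fin 2 → ℂ) : Matrix (Fin 2) (Fin 2) ℂ :=
  Matrix.of fun i j => χ (i, j)

private lemma ptr2_eq (χ : Fin 2 × Fin 2 → ℂ) :
    ptr2 (proj4 χ) = vmat χ * (vmat χ)ᴴ := by
  ext i k
  simp [ptr2, proj4, vmat, Matrix.mul_apply, Matrix.conjTranspose_apply]

private lemma ptr1_eq (χ : Fin 2 × Fin 2 → ℂ) :
    ptr1 (proj4 χ) = ((vmat χ)ᴴ * vmat χ)ᵀ := by
  ext j l
  simp [ptr1, proj4, vmat, Matrix.mul_apply, Matrix.conjTranspose_apply,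
    Matrix.transpose_apply, mul_comm]

private lemma trace_mul_ct (χ φ : Fin 2 × Fin 2 → ℂ) :
    (vmat χ * (vmat φ)ᴴ).trace = ∑ p, χ p * star (φ p) := by
  simp only [Matrix.trace, Matrix.diag, Matrix.mul_apply, Matrix.conjTranspose_apply,
    vmat, Matrix.of_apply, Fintype.sum_prod_type, Fin.sum_univ_two]
  try ring

private lemma trace_ct_mul (χ φ : Fin 2 × Fin 2 → ℂ) :
    ((vmat χ)ᴴ * vmat φ).trace = inner4 χ φ := by
  simp only [Matrix.trace, Matrix.diag, Matrix.mul_apply, Matrix.conjTranspose_apply,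
    vmat, Matrix.of_apply, inner4, Fintype.sum_prod_type, Fin.sum_univ_two]
  try ring

private lemma sandwich1 (A B : Matrix (Fin 2) (Fin 2) ℂ) (h : Aᴴ * A = Bᴴ * B) :
    (A * Bᴴ)ᴴ * (A * Bᴴ) = (B * Bᴴ) * (B * Bᴴ) := by
  have e : B * (Aᴴ * A) * Bᴴ = B * (Bᴴ * B) * Bᴴ := by rw [h]
  rw [Matrix.conjTranspose_mul, Matrix.conjTranspose_conjTranspose]
  calc B * Aᴴ * (A * Bᴴ) = B * (Aᴴ * A) * Bᴴ := by
        simp only [Matrix.mul_assoc]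
    _ = B * (Bᴴ * B) * Bᴴ := e
    _ = B * Bᴴ * (B * Bᴴ) := by simp only [Matrix.mul_assoc]

/-- Masking two orthogonal pure two-qubit states forces both masked
states to be maximally entangled (both partial traces equal (1/2)·I₂). -/
theorem masking_orthogonal_states_requires_maximal_entanglement
    (χ₁ χ₂ : Fin 2 × Fin 2 → ℂ)
    (h₁ : UnitVec χ₁) (h₂ : UnitVec χ₂)
    (horth : inner4 χ₁ χ₂ = 0)
    (hmask1 : ptr1 (proj4 χ₁) = ptr1 (proj4 χ₂))
    (hmask2 : ptr2 (proj4 χ₁) = ptr2 (proj4 χ₂)) :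
    ptr1 (proj4 χ₁) = (1/2 : ℂ) • (1 : Matrix (Fin 2) (Fin 2) ℂ) ∧
    ptr2 (proj4 χ₁) = (1/2 : ℂ) • (1 : Matrix (Fin 2) (Fin 2) ℂ) ∧
    ptr1 (proj4 χ₂) = (1/2 : ℂ) • (1 : Matrix (Fin 2) (Fin 2) ℂ) ∧
    ptr2 (proj4 χ₂) = (1/2 : ℂ) • (1 : Matrix (Fin 2) (Fin 2) ℂ) := by
  set X₁ := vmat χ₁ with hX₁
  set X₂ := vmat χ₂ with hX₂
  have hP : X₁ * X₁ᴴ = X₂ * X₂ᴴ := by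
    rw [← ptr2_eq, ← ptr2_eq]; exact hmask2
  have hQ : X₁ᴴ * X₁ = X₂ᴴ * X₂ := by
    have h := hmask1
    rw [ptr1_eq, ptr1_eq] at h
    have := congrArg Matrix.transpose h
    simpa using this
  have htP : (X₁ * X₁ᴴ).trace = 1 := by rw [trace_mul_ct]; exact h₁
  have htQ : (X₁ᴴ * X₁).trace = 1 := by
    rw [trace_ct_mul]
    have e : inner4 χ₁ χ₁ = ∑ p, χ₁ p * star (χ₁ p) := by
      simp [inner4, mul_comm]
    rw [e]; exact h₁
  have htS : (X₁ * X₂ᴴ).trace = 0 := by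
    rw [trace_mul_ct]
    have e : (∑ p, χ₁ p * star (χ₂ p)) = star (inner4 χ₁ χ₂) := by
      simp [inner4, mul_comm]
    rw [e, horth, star_zero]
  have htS' : (X₁ᴴ * X₂).trace = 0 := by rw [trace_ct_mul]; exact horth
  -- the second-subsystem reduced state
  have hP1 : (X₁ * X₂ᴴ)ᴴ * (X₁ * X₂ᴴ) = (X₁ * X₁ᴴ) * (X₁ * X₁ᴴ) := by
    rw [sandwich1 X₁ X₂ hQ, ← hP]
  have hP2 : (X₁ * X₂ᴴ) * (X₁ * X₂ᴴ)ᴴ = (X₁ * X₁ᴴ) * (X₁ * X₁ᴴ) := by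
    have := sandwich1 X₂ X₁ hQ.symm
    simpa [Matrix.conjTranspose_mul] using this
  have keyP : X₁ * X₁ᴴ = (1/2 : ℂ) • (1 : Matrix (Fin 2) (Fin 2) ℂ) :=
    key2 _ (X₁ * X₂ᴴ) hP1 hP2 htS htP
  -- the first-subsystem reduced state
  have hQ1 : (X₁ᴴ * X₂)ᴴ * (X₁ᴴ * X₂) = (X₁ᴴ * X₁) * (X₁ᴴ * X₁) := by
    have := sandwich1 (X₁ᴴ) (X₂ᴴ) (by simpa using hP)
    rw [show X₂ᴴ * X₂ᴴᴴ = X₂ᴴ * X₂ by simp, ← hQ] at this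
    simpa using this
  have hQ2 : (X₁ᴴ * X₂) * (X₁ᴴ * X₂)ᴴ = (X₁ᴴ * X₁) * (X₁ᴴ * X₁) := by
    have := sandwich1 (X₂ᴴ) (X₁ᴴ) (by simpa using hP.symm)
    rw [show X₁ᴴ * X₁ᴴᴴ = X₁ᴴ * X₁ by simp] at this
    simpa [Matrix.conjTranspose_mul] using this
  have keyQ : X₁ᴴ * X₁ = (1/2 : ℂ) • (1 : Matrix (Fin 2) (Fin 2) ℂ) :=
    key2 _ (X₁ᴴ * X₂) hQ1 hQ2 htS' htQ
  have g1 : ptr1 (proj4 χ₁) = (1/2 : ℂ) • (1 : Matrix (Fin 2) (Fin 2) ℂ) := by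
    rw [ptr1_eq]
    rw [show vmat χ₁ = X₁ from rfl, keyQ]
    simp
  have g2 : ptr2 (proj4 χ₁) = (1/2 : ℂ) • (1 : Matrix (Fin 2) (Fin 2) ℂ) := by
    rw [ptr2_eq]
    rw [show vmat χ₁ = X₁ from rfl]
    exact keyP
  exact ⟨g1, g2, hmask1 ▸ g1, hmask2 ▸ g2⟩

end
end

section
/- For real parameters θ, θ' and α₁, α₂ ∈ [0,1], define unit vectors in ℂ²: η₀ = cos(θ'/2)e₀ + sin(θ'/2)e₁, η₁ = cos(θ/2)e₀ + sin(θ/2)e₁, η₀^⊥ = sin(θ'/2)e₀ − cos(θ'/2)e₁, η₁^⊥ = sin(θ/2)e₀ − cos(θ/2)e₁, and the two-qubit vectors χ₁ = √α₁ (e₀ ⊗ η₀) + √(1−α₁) (e₁ ⊗ η₁) and χ₂ = √α₂ (e₀ ⊗ η₀^⊥) + √(1−α₂) (e₁ ⊗ η₁^⊥). Then Tr₁ |χ₁⟩⟨χ₁| = Tr₁ |χ₂⟩⟨χ₂| and Tr₂ |χ₁⟩⟨χ₁| = Tr₂ |χ₂⟩⟨χ₂| hold if and only if α₁ = 1/2,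 α₂ = 1/2, and cos((θ' − θ)/2) = 0 (equivalently θ' ≡ θ + π (mod 2π)); and in that case all four partial traces equal (1/2)·I₂. -/
open Matrix Kronecker Polynomial ComplexOrder

noncomputable section

/-- η₀-type vector: cos(t/2)e₀ + sin(t/2)e₁. -/
def eta (t : ℝ) : Fin 2 → ℂ := ![(Real.cos (t/2) : ℂ), (Real.sin (t/2) : ℂ)]

/-- η⊥-type vector: sin(t/2)e₀ − cos(t/2)e₁. -/
def etaPerp (t : ℝ) : Fin 2 → ℂ := ![(Real.sin (t/2) : ℂ), (-(Real.cos (t/2)) : ℂ)]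

/-- χ₁ = √α₁ (e₀ ⊗ η₀) + √(1−α₁) (e₁ ⊗ η₁), with η₀ at angle θ' and η₁ at angle θ. -/
def chi1 (θ θ' α₁ : ℝ) : Fin 2 × Fin 2 → ℂ :=
  fun q => (Real.sqrt α₁ : ℂ) * tens e₀ (eta θ') q + (Real.sqrt (1 - α₁) : ℂ) * tens e₁ (eta θ) q

/-- χ₂ = √α₂ (e₀ ⊗ η₀^⊥) + √(1−α₂) (e₁ ⊗ η₁^⊥). -/
def chi2 (θ θ' α₂ : ℝ) : Fin 2 × Fin 2 → ℂ :=
  fun q => (Real.sqrt α₂ : ℂ) * tens e₀ (etaPerp θ') q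
    + (Real.sqrt (1 - α₂) : ℂ) * tens e₁ (etaPerp θ) q

private lemma fwd_real (a b c s c' s' : ℝ)
    (p1 : c^2 + s^2 = 1) (p2 : c'^2 + s'^2 = 1)
    (hA : a = b)
    (h00 : a*c'^2 + (1-a)*c^2 = b*s'^2 + (1-b)*s^2)
    (h01 : a*(c'*s') + (1-a)*(c*s) = -(b*(s'*c')) - (1-b)*(s*c)) :
    a = 1/2 ∧ b = 1/2 ∧ c'*c + s'*s = 0 := by
  subst hA
  have hD : a*(c'^2 - s'^2) + (1-a)*(c^2 - s^2) = 0 := by linear_combination h00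
  have hM : a*(c'*s') + (1-a)*(c*s) = 0 := by linear_combination (1/2)*h01
  have ha : a = 1/2 := by
    linear_combination (1/2)*((a*(c'^2-s'^2) - (1-a)*(c^2-s^2))*hD
      + 4*(a*(c'*s') - (1-a)*(c*s))*hM
      - a^2*(1+c'^2+s'^2)*p2 + (1-a)^2*(1+c^2+s^2)*p1)
  subst ha
  have hc2 : c'^2 = s^2 := by linear_combination hD + (1/2)*p2 - (1/2)*p1
  have hs2 : s'^2 = c^2 := by linarith
  have hM' : c'*s' + c*s = 0 := by linear_combination 2*hM
  have ht : (c'*c + s'*s)^2 = 0 := by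
    linear_combination c^2*hc2 + s^2*hs2 + 2*c*s*hM'
  exact ⟨rfl, rfl, sq_eq_zero_iff.mp ht⟩

private lemma bwd_real (c s c' s' : ℝ) (p1 : c^2+s^2 = 1) (p2 : c'^2+s'^2 = 1)
    (hcs : c'*c + s'*s = 0) :
    c'^2 = s^2 ∧ s'^2 = c^2 ∧ c'*s' + c*s = 0 := by
  have hc2 : c'^2 = s^2 := by linear_combination -c'^2*p1 + s^2*p2 + (c'*c - s'*s)*hcs
  have hs2 : s'^2 = c^2 := by linarith
  have ht : (c'*s' + c*s)^2 = 0 := by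
    linear_combination s'^2*hc2 - s^2*hs2 + 2*(s'*s)*hcs
  exact ⟨hc2, hs2, sq_eq_zero_iff.mp ht⟩

/-- the masking conditions for the Walgate-form orthogonal pair hold
iff α₁ = α₂ = 1/2 and cos((θ'−θ)/2) = 0; and then all four partial traces are (1/2)·I₂. -/
theorem masking_condition_for_walgate_form
    (θ θ' α₁ α₂ : ℝ) (hα₁ : α₁ ∈ Set.Icc (0 : ℝ) 1) (hα₂ : α₂ ∈ Set.Icc (0 : ℝ) 1) :
    ((ptr1 (proj4 (chi1 θ θ' α₁)) = ptr1 (proj4 (chi2 θ θ' α₂)) ∧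
      ptr2 (proj4 (chi1 θ θ' α₁)) = ptr2 (proj4 (chi2 θ θ' α₂))) ↔
      (α₁ = 1/2 ∧ α₂ = 1/2 ∧ Real.cos ((θ' - θ)/2) = 0)) ∧
    ((α₁ = 1/2 ∧ α₂ = 1/2 ∧ Real.cos ((θ' - θ)/2) = 0) →
      (ptr1 (proj4 (chi1 θ θ' α₁)) = (1/2 : ℂ) • (1 : Matrix (Fin 2) (Fin 2) ℂ) ∧
       ptr2 (proj4 (chi1 θ θ' α₁)) = (1/2 : ℂ) • (1 : Matrix (Fin 2) (Fin 2) ℂ) ∧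
       ptr1 (proj4 (chi2 θ θ' α₂)) = (1/2 : ℂ) • (1 : Matrix (Fin 2) (Fin 2) ℂ) ∧
       ptr2 (proj4 (chi2 θ θ' α₂)) = (1/2 : ℂ) • (1 : Matrix (Fin 2) (Fin 2) ℂ))) := by
  obtain ⟨ha10, ha11⟩ := hα₁
  obtain ⟨ha20, ha21⟩ := hα₂
  have p1 : Real.cos (θ / 2)^2 + Real.sin (θ / 2)^2 = 1 := by linear_combination Real.sin_sq_add_cos_sq (θ / 2)
  have p2 : Real.cos (θ' / 2)^2 + Real.sin (θ' / 2)^2 = 1 := by linear_combination Real.sin_sq_add_cos_sq (θ' / 2)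
  have sa1 : Real.sqrt α₁ * Real.sqrt α₁ = α₁ := Real.mul_self_sqrt ha10
  have sb1 : Real.sqrt (1-α₁) * Real.sqrt (1-α₁) = 1-α₁ := Real.mul_self_sqrt (by linarith)
  have sa2 : Real.sqrt α₂ * Real.sqrt α₂ = α₂ := Real.mul_self_sqrt ha20
  have sb2 : Real.sqrt (1-α₂) * Real.sqrt (1-α₂) = 1-α₂ := Real.mul_self_sqrt (by linarith)
  have hcos : Real.cos ((θ' - θ)/2) = Real.cos (θ' / 2) * Real.cos (θ / 2) + Real.sin (θ' / 2) * Real.sin (θ / 2) := by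
    rw [show (θ' - θ)/2 = θ'/2 - θ/2 by ring, Real.cos_sub]
  have key : (α₁ = 1/2 ∧ α₂ = 1/2 ∧ Real.cos ((θ' - θ)/2) = 0) →
      (ptr1 (proj4 (chi1 θ θ' α₁)) = (1/2 : ℂ) • (1 : Matrix (Fin 2) (Fin 2) ℂ) ∧
       ptr2 (proj4 (chi1 θ θ' α₁)) = (1/2 : ℂ) • (1 : Matrix (Fin 2) (Fin 2) ℂ) ∧
       ptr1 (proj4 (chi2 θ θ' α₂)) = (1/2 : ℂ) • (1 : Matrix (Fin 2) (Fin 2) ℂ) ∧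
       ptr2 (proj4 (chi2 θ θ' α₂)) = (1/2 : ℂ) • (1 : Matrix (Fin 2) (Fin 2) ℂ)) := by
    rintro ⟨h1, h2, h3⟩
    subst h1; subst h2
    rw [hcos] at h3
    obtain ⟨hc2, hs2, hmix⟩ := bwd_real (Real.cos (θ / 2)) (Real.sin (θ / 2)) (Real.cos (θ' / 2)) (Real.sin (θ' / 2)) p1 p2 h3
    have s11 := sa1
    have s12 := sb1
    refine ⟨?_, ?_, ?_, ?_⟩ <;> (ext i j; fin_cases i <;> fin_cases j)
    · simp only [ptr1, ptr2, proj4, chi1, chi2, tens, e₀, e₁, _root_.eta, etaPerp, Matrix.of_apply,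
      Fin.sum_univ_two, Matrix.cons_val_zero, Matrix.cons_val_one, Matrix.head_cons,
      Complex.star_def, _root_.map_add, _root_.map_mul, _root_.map_neg, _root_.map_one,
      _root_.map_zero, Complex.conj_ofReal, one_mul, zero_mul, mul_zero, mul_one, add_zero,
      zero_add, mul_neg, neg_mul, neg_neg, Fin.mk_zero, Fin.mk_one, Matrix.smul_apply,
      Matrix.one_apply, smul_eq_mul, reduceIte, Fin.reduceEq, if_true, if_false]
      rw [show (1/2 : ℂ) = ((1/2:ℝ):ℂ) by push_cast; ring]
      norm_cast
      linear_combination Real.cos (θ' / 2)^2*s11 + Real.cos (θ / 2)^2*s12 + (1/2)*hc2 + (1/2)*p1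
    · simp only [ptr1, ptr2, proj4, chi1, chi2, tens, e₀, e₁, _root_.eta, etaPerp, Matrix.of_apply,
      Fin.sum_univ_two, Matrix.cons_val_zero, Matrix.cons_val_one, Matrix.head_cons,
      Complex.star_def, _root_.map_add, _root_.map_mul, _root_.map_neg, _root_.map_one,
      _root_.map_zero, Complex.conj_ofReal, one_mul, zero_mul, mul_zero, mul_one, add_zero,
      zero_add, mul_neg, neg_mul, neg_neg, Fin.mk_zero, Fin.mk_one, Matrix.smul_apply,
      Matrix.one_apply, smul_eq_mul, reduceIte, Fin.reduceEq, if_true, if_false]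
      norm_cast
      linear_combination Real.cos (θ' / 2)*Real.sin (θ' / 2)*s11 + Real.cos (θ / 2)*Real.sin (θ / 2)*s12 + (1/2)*hmix
    · simp only [ptr1, ptr2, proj4, chi1, chi2, tens, e₀, e₁, _root_.eta, etaPerp, Matrix.of_apply,
      Fin.sum_univ_two, Matrix.cons_val_zero, Matrix.cons_val_one, Matrix.head_cons,
      Complex.star_def, _root_.map_add, _root_.map_mul, _root_.map_neg, _root_.map_one,
      _root_.map_zero, Complex.conj_ofReal, one_mul, zero_mul, mul_zero, mul_one, add_zero,
      zero_add, mul_neg, neg_mul, neg_neg, Fin.mk_zero, Fin.mk_one, Matrix.smul_apply,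
      Matrix.one_apply, smul_eq_mul, reduceIte, Fin.reduceEq, if_true, if_false]
      norm_cast
      linear_combination Real.cos (θ' / 2)*Real.sin (θ' / 2)*s11 + Real.cos (θ / 2)*Real.sin (θ / 2)*s12 + (1/2)*hmix
    · simp only [ptr1, ptr2, proj4, chi1, chi2, tens, e₀, e₁, _root_.eta, etaPerp, Matrix.of_apply,
      Fin.sum_univ_two, Matrix.cons_val_zero, Matrix.cons_val_one, Matrix.head_cons,
      Complex.star_def, _root_.map_add, _root_.map_mul, _root_.map_neg, _root_.map_one,
      _root_.map_zero, Complex.conj_ofReal, one_mul, zero_mul, mul_zero, mul_one, add_zero,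
      zero_add, mul_neg, neg_mul, neg_neg, Fin.mk_zero, Fin.mk_one, Matrix.smul_apply,
      Matrix.one_apply, smul_eq_mul, reduceIte, Fin.reduceEq, if_true, if_false]
      rw [show (1/2 : ℂ) = ((1/2:ℝ):ℂ) by push_cast; ring]
      norm_cast
      linear_combination Real.sin (θ' / 2)^2*s11 + Real.sin (θ / 2)^2*s12 + (1/2)*hs2 + (1/2)*p1
    · simp only [ptr1, ptr2, proj4, chi1, chi2, tens, e₀, e₁, _root_.eta, etaPerp, Matrix.of_apply,
      Fin.sum_univ_two, Matrix.cons_val_zero, Matrix.cons_val_one, Matrix.head_cons,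
      Complex.star_def, _root_.map_add, _root_.map_mul, _root_.map_neg, _root_.map_one,
      _root_.map_zero, Complex.conj_ofReal, one_mul, zero_mul, mul_zero, mul_one, add_zero,
      zero_add, mul_neg, neg_mul, neg_neg, Fin.mk_zero, Fin.mk_one, Matrix.smul_apply,
      Matrix.one_apply, smul_eq_mul, reduceIte, Fin.reduceEq, if_true, if_false]
      rw [show (1/2 : ℂ) = ((1/2:ℝ):ℂ) by push_cast; ring]
      norm_cast
      linear_combination (Real.cos (θ' / 2)^2+Real.sin (θ' / 2)^2)*s11 + (1/2)*p2
    · simp only [ptr1, ptr2, proj4, chi1, chi2, tens, e₀, e₁, _root_.eta, etaPerp, Matrix.of_apply,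
      Fin.sum_univ_two, Matrix.cons_val_zero, Matrix.cons_val_one, Matrix.head_cons,
      Complex.star_def, _root_.map_add, _root_.map_mul, _root_.map_neg, _root_.map_one,
      _root_.map_zero, Complex.conj_ofReal, one_mul, zero_mul, mul_zero, mul_one, add_zero,
      zero_add, mul_neg, neg_mul, neg_neg, Fin.mk_zero, Fin.mk_one, Matrix.smul_apply,
      Matrix.one_apply, smul_eq_mul, reduceIte, Fin.reduceEq, if_true, if_false]
      norm_cast
      linear_combination (Real.sqrt (1/2)*Real.sqrt (1-1/2))*h3
    · simp only [ptr1, ptr2, proj4, chi1, chi2, tens, e₀, e₁, _root_.eta, etaPerp, Matrix.of_apply,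
      Fin.sum_univ_two, Matrix.cons_val_zero, Matrix.cons_val_one, Matrix.head_cons,
      Complex.star_def, _root_.map_add, _root_.map_mul, _root_.map_neg, _root_.map_one,
      _root_.map_zero, Complex.conj_ofReal, one_mul, zero_mul, mul_zero, mul_one, add_zero,
      zero_add, mul_neg, neg_mul, neg_neg, Fin.mk_zero, Fin.mk_one, Matrix.smul_apply,
      Matrix.one_apply, smul_eq_mul, reduceIte, Fin.reduceEq, if_true, if_false]
      norm_cast
      linear_combination (Real.sqrt (1/2)*Real.sqrt (1-1/2))*h3
    · simp only [ptr1, ptr2, proj4, chi1, chi2, tens, e₀, e₁, _root_.eta, etaPerp, Matrix.of_apply,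
      Fin.sum_univ_two, Matrix.cons_val_zero, Matrix.cons_val_one, Matrix.head_cons,
      Complex.star_def, _root_.map_add, _root_.map_mul, _root_.map_neg, _root_.map_one,
      _root_.map_zero, Complex.conj_ofReal, one_mul, zero_mul, mul_zero, mul_one, add_zero,
      zero_add, mul_neg, neg_mul, neg_neg, Fin.mk_zero, Fin.mk_one, Matrix.smul_apply,
      Matrix.one_apply, smul_eq_mul, reduceIte, Fin.reduceEq, if_true, if_false]
      rw [show (1/2 : ℂ) = ((1/2:ℝ):ℂ) by push_cast; ring]
      norm_cast
      linear_combination (Real.cos (θ / 2)^2+Real.sin (θ / 2)^2)*s12 + (1/2)*p1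
    · simp only [ptr1, ptr2, proj4, chi1, chi2, tens, e₀, e₁, _root_.eta, etaPerp, Matrix.of_apply,
      Fin.sum_univ_two, Matrix.cons_val_zero, Matrix.cons_val_one, Matrix.head_cons,
      Complex.star_def, _root_.map_add, _root_.map_mul, _root_.map_neg, _root_.map_one,
      _root_.map_zero, Complex.conj_ofReal, one_mul, zero_mul, mul_zero, mul_one, add_zero,
      zero_add, mul_neg, neg_mul, neg_neg, Fin.mk_zero, Fin.mk_one, Matrix.smul_apply,
      Matrix.one_apply, smul_eq_mul, reduceIte, Fin.reduceEq, if_true, if_false]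
      rw [show (1/2 : ℂ) = ((1/2:ℝ):ℂ) by push_cast; ring]
      norm_cast
      linear_combination Real.sin (θ' / 2)^2*s11 + Real.sin (θ / 2)^2*s12 + (1/2)*hs2 + (1/2)*p1
    · simp only [ptr1, ptr2, proj4, chi1, chi2, tens, e₀, e₁, _root_.eta, etaPerp, Matrix.of_apply,
      Fin.sum_univ_two, Matrix.cons_val_zero, Matrix.cons_val_one, Matrix.head_cons,
      Complex.star_def, _root_.map_add, _root_.map_mul, _root_.map_neg, _root_.map_one,
      _root_.map_zero, Complex.conj_ofReal, one_mul, zero_mul, mul_zero, mul_one, add_zero,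
      zero_add, mul_neg, neg_mul, neg_neg, Fin.mk_zero, Fin.mk_one, Matrix.smul_apply,
      Matrix.one_apply, smul_eq_mul, reduceIte, Fin.reduceEq, if_true, if_false]
      norm_cast
      linear_combination -(Real.sin (θ' / 2)*Real.cos (θ' / 2))*s11 - (Real.sin (θ / 2)*Real.cos (θ / 2))*s12 - (1/2)*hmix
    · simp only [ptr1, ptr2, proj4, chi1, chi2, tens, e₀, e₁, _root_.eta, etaPerp, Matrix.of_apply,
      Fin.sum_univ_two, Matrix.cons_val_zero, Matrix.cons_val_one, Matrix.head_cons,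
      Complex.star_def, _root_.map_add, _root_.map_mul, _root_.map_neg, _root_.map_one,
      _root_.map_zero, Complex.conj_ofReal, one_mul, zero_mul, mul_zero, mul_one, add_zero,
      zero_add, mul_neg, neg_mul, neg_neg, Fin.mk_zero, Fin.mk_one, Matrix.smul_apply,
      Matrix.one_apply, smul_eq_mul, reduceIte, Fin.reduceEq, if_true, if_false]
      norm_cast
      linear_combination -(Real.sin (θ' / 2)*Real.cos (θ' / 2))*s11 - (Real.sin (θ / 2)*Real.cos (θ / 2))*s12 - (1/2)*hmix
    · simp only [ptr1, ptr2, proj4, chi1, chi2, tens, e₀, e₁, _root_.eta, etaPerp, Matrix.of_apply,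
      Fin.sum_univ_two, Matrix.cons_val_zero, Matrix.cons_val_one, Matrix.head_cons,
      Complex.star_def, _root_.map_add, _root_.map_mul, _root_.map_neg, _root_.map_one,
      _root_.map_zero, Complex.conj_ofReal, one_mul, zero_mul, mul_zero, mul_one, add_zero,
      zero_add, mul_neg, neg_mul, neg_neg, Fin.mk_zero, Fin.mk_one, Matrix.smul_apply,
      Matrix.one_apply, smul_eq_mul, reduceIte, Fin.reduceEq, if_true, if_false]
      rw [show (1/2 : ℂ) = ((1/2:ℝ):ℂ) by push_cast; ring]
      norm_cast
      linear_combination Real.cos (θ' / 2)^2*s11 + Real.cos (θ / 2)^2*s12 + (1/2)*hc2 + (1/2)*p1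
    · simp only [ptr1, ptr2, proj4, chi1, chi2, tens, e₀, e₁, _root_.eta, etaPerp, Matrix.of_apply,
      Fin.sum_univ_two, Matrix.cons_val_zero, Matrix.cons_val_one, Matrix.head_cons,
      Complex.star_def, _root_.map_add, _root_.map_mul, _root_.map_neg, _root_.map_one,
      _root_.map_zero, Complex.conj_ofReal, one_mul, zero_mul, mul_zero, mul_one, add_zero,
      zero_add, mul_neg, neg_mul, neg_neg, Fin.mk_zero, Fin.mk_one, Matrix.smul_apply,
      Matrix.one_apply, smul_eq_mul, reduceIte, Fin.reduceEq, if_true, if_false]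
      rw [show (1/2 : ℂ) = ((1/2:ℝ):ℂ) by push_cast; ring]
      norm_cast
      linear_combination (Real.sin (θ' / 2)^2+Real.cos (θ' / 2)^2)*s11 + (1/2)*p2
    · simp only [ptr1, ptr2, proj4, chi1, chi2, tens, e₀, e₁, _root_.eta, etaPerp, Matrix.of_apply,
      Fin.sum_univ_two, Matrix.cons_val_zero, Matrix.cons_val_one, Matrix.head_cons,
      Complex.star_def, _root_.map_add, _root_.map_mul, _root_.map_neg, _root_.map_one,
      _root_.map_zero, Complex.conj_ofReal, one_mul, zero_mul, mul_zero, mul_one, add_zero,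
      zero_add, mul_neg, neg_mul, neg_neg, Fin.mk_zero, Fin.mk_one, Matrix.smul_apply,
      Matrix.one_apply, smul_eq_mul, reduceIte, Fin.reduceEq, if_true, if_false]
      norm_cast
      linear_combination (Real.sqrt (1/2)*Real.sqrt (1-1/2))*h3
    · simp only [ptr1, ptr2, proj4, chi1, chi2, tens, e₀, e₁, _root_.eta, etaPerp, Matrix.of_apply,
      Fin.sum_univ_two, Matrix.cons_val_zero, Matrix.cons_val_one, Matrix.head_cons,
      Complex.star_def, _root_.map_add, _root_.map_mul, _root_.map_neg, _root_.map_one,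
      _root_.map_zero, Complex.conj_ofReal, one_mul, zero_mul, mul_zero, mul_one, add_zero,
      zero_add, mul_neg, neg_mul, neg_neg, Fin.mk_zero, Fin.mk_one, Matrix.smul_apply,
      Matrix.one_apply, smul_eq_mul, reduceIte, Fin.reduceEq, if_true, if_false]
      norm_cast
      linear_combination (Real.sqrt (1/2)*Real.sqrt (1-1/2))*h3
    · simp only [ptr1, ptr2, proj4, chi1, chi2, tens, e₀, e₁, _root_.eta, etaPerp, Matrix.of_apply,
      Fin.sum_univ_two, Matrix.cons_val_zero, Matrix.cons_val_one, Matrix.head_cons,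
      Complex.star_def, _root_.map_add, _root_.map_mul, _root_.map_neg, _root_.map_one,
      _root_.map_zero, Complex.conj_ofReal, one_mul, zero_mul, mul_zero, mul_one, add_zero,
      zero_add, mul_neg, neg_mul, neg_neg, Fin.mk_zero, Fin.mk_one, Matrix.smul_apply,
      Matrix.one_apply, smul_eq_mul, reduceIte, Fin.reduceEq, if_true, if_false]
      rw [show (1/2 : ℂ) = ((1/2:ℝ):ℂ) by push_cast; ring]
      norm_cast
      linear_combination (Real.sin (θ / 2)^2+Real.cos (θ / 2)^2)*s12 + (1/2)*p1
  refine ⟨⟨fun hh => ?_, fun h => ?_⟩, key⟩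
  · obtain ⟨h1, h2⟩ := hh
    have q00 := Matrix.ext_iff.mpr h2 0 0
    simp only [ptr1, ptr2, proj4, chi1, chi2, tens, e₀, e₁, _root_.eta, etaPerp, Matrix.of_apply,
      Fin.sum_univ_two, Matrix.cons_val_zero, Matrix.cons_val_one, Matrix.head_cons,
      Complex.star_def, _root_.map_add, _root_.map_mul, _root_.map_neg, _root_.map_one,
      _root_.map_zero, Complex.conj_ofReal, one_mul, zero_mul, mul_zero, mul_one, add_zero,
      zero_add, mul_neg, neg_mul, neg_neg, Fin.mk_zero, Fin.mk_one, Matrix.smul_apply,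
      Matrix.one_apply, smul_eq_mul, reduceIte, Fin.reduceEq, if_true, if_false] at q00
    norm_cast at q00
    have r00 := Matrix.ext_iff.mpr h1 0 0
    simp only [ptr1, ptr2, proj4, chi1, chi2, tens, e₀, e₁, _root_.eta, etaPerp, Matrix.of_apply,
      Fin.sum_univ_two, Matrix.cons_val_zero, Matrix.cons_val_one, Matrix.head_cons,
      Complex.star_def, _root_.map_add, _root_.map_mul, _root_.map_neg, _root_.map_one,
      _root_.map_zero, Complex.conj_ofReal, one_mul, zero_mul, mul_zero, mul_one, add_zero,
      zero_add, mul_neg, neg_mul, neg_neg, Fin.mk_zero, Fin.mk_one, Matrix.smul_apply,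
      Matrix.one_apply, smul_eq_mul, reduceIte, Fin.reduceEq, if_true, if_false] at r00
    norm_cast at r00
    have r01 := Matrix.ext_iff.mpr h1 0 1
    simp only [ptr1, ptr2, proj4, chi1, chi2, tens, e₀, e₁, _root_.eta, etaPerp, Matrix.of_apply,
      Fin.sum_univ_two, Matrix.cons_val_zero, Matrix.cons_val_one, Matrix.head_cons,
      Complex.star_def, _root_.map_add, _root_.map_mul, _root_.map_neg, _root_.map_one,
      _root_.map_zero, Complex.conj_ofReal, one_mul, zero_mul, mul_zero, mul_one, add_zero,
      zero_add, mul_neg, neg_mul, neg_neg, Fin.mk_zero, Fin.mk_one, Matrix.smul_apply,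
      Matrix.one_apply, smul_eq_mul, reduceIte, Fin.reduceEq, if_true, if_false] at r01
    norm_cast at r01
    have hA : α₁ = α₂ := by
      linear_combination q00 - (Real.cos (θ' / 2)^2+Real.sin (θ' / 2)^2)*sa1 + (Real.cos (θ' / 2)^2+Real.sin (θ' / 2)^2)*sa2 - (α₁-α₂)*p2
    have h00 : α₁*Real.cos (θ' / 2)^2 + (1-α₁)*Real.cos (θ / 2)^2 = α₂*Real.sin (θ' / 2)^2 + (1-α₂)*Real.sin (θ / 2)^2 := by
      linear_combination r00 - Real.cos (θ' / 2)^2*sa1 - Real.cos (θ / 2)^2*sb1 + Real.sin (θ' / 2)^2*sa2 + Real.sin (θ / 2)^2*sb2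
    have h01 : α₁*(Real.cos (θ' / 2)*Real.sin (θ' / 2)) + (1-α₁)*(Real.cos (θ / 2)*Real.sin (θ / 2)) =
        -(α₂*(Real.sin (θ' / 2)*Real.cos (θ' / 2))) - (1-α₂)*(Real.sin (θ / 2)*Real.cos (θ / 2)) := by
      linear_combination r01 - (Real.cos (θ' / 2)*Real.sin (θ' / 2))*sa1 - (Real.cos (θ / 2)*Real.sin (θ / 2))*sb1 - (Real.sin (θ' / 2)*Real.cos (θ' / 2))*sa2 - (Real.sin (θ / 2)*Real.cos (θ / 2))*sb2
    obtain ⟨x1, x2, x3⟩ := fwd_real α₁ α₂ (Real.cos (θ / 2)) (Real.sin (θ / 2)) (Real.cos (θ' / 2)) (Real.sin (θ' / 2)) p1 p2 hA h00 h01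
    exact ⟨x1, x2, by rw [hcos]; exact x3⟩
  · obtain ⟨k1, k2, k3, k4⟩ := key h
    exact ⟨k1.trans k3.symm, k2.trans k4.symm⟩

end
end

section
/- Let χ₁ and χ₂ be orthonormal vectors in ℂ²⊗ℂ² whose rank-one projections have equal partial traces on both subsystems (Tr₁ |χ₁⟩⟨χ₁| = Tr₁ |χ₂⟩⟨χ₂| and Tr₂ |χ₁⟩⟨χ₁| = Tr₂ |χ₂⟩⟨χ₂|). For p ∈ [0,1], set ρ(p) = p|χ₁⟩⟨χ₁| + (1−p)|χ₂⟩⟨χ₂|. Then Tr₁ ρ(p) = Tr₂ ρ(p) = (1/2)·I₂ for every p, and the eigenvalues of the Hermitian matrix ρ(p) are exactly p, 1−p, 0, 0 (with multiplicity). Consequently the von Neumann entropy of ρ(p), namely −p·log₂ p − (1−p)·log₂(1−p), is strictly less than the local entropy 1 = S((1/2)I₂) whenever p ≠ 1/2, with equality exactly at p = 1/2. -/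
open Matrix Kronecker Polynomial ComplexOrder

noncomputable section

lemma core_scalar (r s z t u v w : ℂ)
    (hr : star r = r) (hs : star s = s)
    (htr : r + s = 1)
    (c1 : t * z + u * s = r * u + z * w)
    (c2 : v * r + w * star z = star z * t + s * v)
    (q1 : star t * t + star v * v = r * r + z * star z)
    (q2 : star u * u + star w * w = star z * z + s * s)
    (q3 : star t * u + star v * w = r * z + z * s)
    (h0 : t + w = 0) :
    r = 1/2 ∧ s = 1/2 ∧ z = 0 := by
  have hw : w = -t := by linear_combination h0
  subst hw
  have hA : u * (r - s) = 2 * z * t := by linear_combination -c1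
  have hB : v * (r - s) = 2 * star z * t := by linear_combination c2
  have hC : star t * u - star v * t = z := by linear_combination q3 + z * htr
  by_cases hd : r - s = 0
  · have hr2 : r = 1/2 := by linear_combination (htr + hd) / 2
    have hs2 : s = 1/2 := by linear_combination (htr - hd) / 2
    by_cases ht : t = 0
    · refine ⟨hr2, hs2, ?_⟩
      rw [ht] at hC
      simpa using hC.symm
    · have h2 : 2 * z * t = 0 := by linear_combination -hA + u * hd
      have hz : z = 0 := by
        rcases mul_eq_zero.mp h2 with h | h
        · rcases mul_eq_zero.mp h with h' | h'
          · norm_num at h'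
          · exact h'
        · exact absurd h ht
      exact ⟨hr2, hs2, hz⟩
  · exfalso
    have hsd : star (r - s) = r - s := by rw [star_sub, hr, hs]
    have hB' : star v * (r - s) = 2 * z * star t := by
      have h := congrArg star hB
      simp only [star_mul', hsd, star_star, star_ofNat] at h
      linear_combination h
    have hz : z * (r - s) = 0 := by
      have h : (star t * u - star v * t) * (r - s) = 0 := by
        linear_combination star t * hA - t * hB'
      linear_combination h - (r - s) * hC
    have hz0 : z = 0 := by
      rcases mul_eq_zero.mp hz with h | h
      · exact h
      · exact absurd h hd
    subst hz0
    have hu : u = 0 := by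
      have h : u * (r - s) = 0 := by
        linear_combination hA
      rcases mul_eq_zero.mp h with h | h
      · exact h
      · exact absurd h hd
    have hv : v = 0 := by
      have h : v * (r - s) = 0 := by
        linear_combination hB + 2 * t * (star_zero ℂ)
      rcases mul_eq_zero.mp h with h | h
      · exact h
      · exact absurd h hd
    subst hu hv
    simp only [star_zero, star_neg, mul_zero, zero_mul, add_zero, zero_add,
      neg_mul, mul_neg, neg_neg] at q1 q2
    have hfin : (r - s) * (r + s) = 0 := by linear_combination q2 - q1
    rw [htr, mul_one] at hfin
    exact hd hfin

lemma core_matrix (B T : Matrix (Fin 2) (Fin 2) ℂ)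
    (hH : Bᴴ = B) (htrB : B.trace = 1)
    (hcomm : T * B = B * T) (hq : Tᴴ * T = B * B) (htrT : T.trace = 0) :
    B = (1/2 : ℂ) • 1 := by
  have hy : star (B 0 1) = B 1 0 := by
    have := congrFun (congrFun hH 1) 0
    simpa [Matrix.conjTranspose_apply] using this
  have hr : star (B 0 0) = B 0 0 := by
    have := congrFun (congrFun hH 0) 0
    simpa [Matrix.conjTranspose_apply] using this
  have hs : star (B 1 1) = B 1 1 := by
    have := congrFun (congrFun hH 1) 1
    simpa [Matrix.conjTranspose_apply] using this
  have htr : B 0 0 + B 1 1 = 1 := by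
    simpa [Matrix.trace_fin_two] using htrB
  have c1 : T 0 0 * B 0 1 + T 0 1 * B 1 1 = B 0 0 * T 0 1 + B 0 1 * T 1 1 := by
    have := congrFun (congrFun hcomm 0) 1
    simpa [Matrix.mul_apply, Fin.sum_univ_two] using this
  have c2 : T 1 0 * B 0 0 + T 1 1 * B 1 0 = B 1 0 * T 0 0 + B 1 1 * T 1 0 := by
    have := congrFun (congrFun hcomm 1) 0
    simpa [Matrix.mul_apply, Fin.sum_univ_two] using this
  have q1 : star (T 0 0) * T 0 0 + star (T 1 0) * T 1 0
      = B 0 0 * B 0 0 + B 0 1 * B 1 0 := by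
    have := congrFun (congrFun hq 0) 0
    simpa [Matrix.mul_apply, Fin.sum_univ_two, Matrix.conjTranspose_apply] using this
  have q2 : star (T 0 1) * T 0 1 + star (T 1 1) * T 1 1
      = B 1 0 * B 0 1 + B 1 1 * B 1 1 := by
    have := congrFun (congrFun hq 1) 1
    simpa [Matrix.mul_apply, Fin.sum_univ_two, Matrix.conjTranspose_apply] using this
  have q3 : star (T 0 0) * T 0 1 + star (T 1 0) * T 1 1
      = B 0 0 * B 0 1 + B 0 1 * B 1 1 := by
    have := congrFun (congrFun hq 0) 1
    simpa [Matrix.mul_apply, Fin.sum_univ_two, Matrix.conjTranspose_apply] using this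
  have h0 : T 0 0 + T 1 1 = 0 := by simpa [Matrix.trace_fin_two] using htrT
  have key := core_scalar (B 0 0) (B 1 1) (B 0 1) (T 0 0) (T 0 1) (T 1 0) (T 1 1)
    hr hs htr
    (by linear_combination c1)
    (by rw [hy]; linear_combination c2)
    (by rw [hy]; linear_combination q1)
    (by rw [hy]; linear_combination q2)
    (by linear_combination q3)
    h0
  obtain ⟨h00, h11, h01⟩ := key
  have h10 : B 1 0 = 0 := by rw [← hy, h01, star_zero]
  ext i j
  fin_cases i <;> fin_cases j <;>
    simp [Matrix.smul_apply, Matrix.one_apply, h00, h11, h01, h10]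

lemma charpoly_unitary_conj {n : Type*} [Fintype n] [DecidableEq n]
    (U D : Matrix n n ℂ) (hU : Uᴴ * U = 1) :
    (U * D * Uᴴ).charpoly = D.charpoly := by
  have hU2 : U * Uᴴ = 1 := mul_eq_one_comm.mp hU
  have hmap : (U.map C) * (Uᴴ.map C) = 1 := by
    rw [← Matrix.map_mul, hU2, Matrix.map_one _ (by simp) (by simp)]
  unfold Matrix.charpoly
  have hcm : charmatrix (U * D * Uᴴ)
      = (U.map C) * charmatrix D * (Uᴴ.map C) := by
    unfold charmatrix
    rw [Matrix.mul_sub, Matrix.sub_mul]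
    congr 1
    · have hc : (U.map C) * (Matrix.scalar n (X : ℂ[X])) = Matrix.scalar n X * U.map C :=
        (Matrix.scalar_commute (X : ℂ[X]) (Commute.all X) (U.map C)).symm
      rw [hc, Matrix.mul_assoc, hmap, Matrix.mul_one]

    · simp only [RingHom.mapMatrix_apply]
      rw [Matrix.map_mul, Matrix.map_mul]
  rw [hcm, Matrix.det_mul, Matrix.det_mul]
  have h1 : (U.map C).det * (Uᴴ.map C).det = 1 := by
    rw [← Matrix.det_mul, hmap, Matrix.det_one]
  calc (U.map C).det * (charmatrix D).det * (Uᴴ.map C).det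
      = ((U.map C).det * (Uᴴ.map C).det) * (charmatrix D).det := by ring
    _ = (charmatrix D).det := by rw [h1, one_mul]

lemma charpoly_diag {n : Type*} [Fintype n] [DecidableEq n] (d : n → ℂ) :
    (Matrix.diagonal d).charpoly = ∏ i, (X - C (d i)) := by
  unfold Matrix.charpoly charmatrix
  rw [RingHom.mapMatrix_apply, Matrix.diagonal_map (by simp)]
  rw [show (Matrix.scalar n (X : ℂ[X])) = Matrix.diagonal (fun _ => (X : ℂ[X])) from rfl]
  rw [Matrix.diagonal_sub, Matrix.det_diagonal]

/-- The masked mixture ρ(p) = p|χ₁⟩⟨χ₁| + (1−p)|χ₂⟩⟨χ₂|. -/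
def mix (χ₁ χ₂ : Fin 2 × Fin 2 → ℂ) (p : ℝ) : Matrix (Fin 2 × Fin 2) (Fin 2 × Fin 2) ℂ :=
  (p : ℂ) • proj4 χ₁ + (1 - (p : ℂ)) • proj4 χ₂

/-- for orthonormal masked states, the mixture ρ(p) has maximally mixed
marginals, eigenvalues p, 1−p, 0, 0 (stated via the characteristic polynomial), and its
von Neumann entropy −p·log₂p −(1−p)·log₂(1−p) is < 1 for p ≠ 1/2, = 1 at p = 1/2. -/
theorem entropy_of_masked_mixture_of_orthogonal_states
    (χ₁ χ₂ : Fin 2 × Fin 2 → ℂ)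
    (h₁ : UnitVec χ₁) (h₂ : UnitVec χ₂)
    (horth : inner4 χ₁ χ₂ = 0)
    (hmask1 : ptr1 (proj4 χ₁) = ptr1 (proj4 χ₂))
    (hmask2 : ptr2 (proj4 χ₁) = ptr2 (proj4 χ₂))
    (p : ℝ) (hp : p ∈ Set.Icc (0 : ℝ) 1) :
    ptr1 (mix χ₁ χ₂ p) = (1/2 : ℂ) • (1 : Matrix (Fin 2) (Fin 2) ℂ) ∧
    ptr2 (mix χ₁ χ₂ p) = (1/2 : ℂ) • (1 : Matrix (Fin 2) (Fin 2) ℂ) ∧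
    (mix χ₁ χ₂ p).charpoly
      = (X - C ((p : ℂ))) * (X - C (1 - (p : ℂ))) * X ^ 2 ∧
    (p ≠ 1/2 → -(p * Real.logb 2 p) - (1 - p) * Real.logb 2 (1 - p) < 1) ∧
    (p = 1/2 → -(p * Real.logb 2 p) - (1 - p) * Real.logb 2 (1 - p) = 1) := by
  have hmarg : ptr1 (mix χ₁ χ₂ p) = (1/2 : ℂ) • (1 : Matrix (Fin 2) (Fin 2) ℂ) ∧
      ptr2 (mix χ₁ χ₂ p) = (1/2 : ℂ) • (1 : Matrix (Fin 2) (Fin 2) ℂ) := by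
      set V : Matrix (Fin 2) (Fin 2) ℂ := Matrix.of fun i j => χ₁ (i, j) with hV
      set W : Matrix (Fin 2) (Fin 2) ℂ := Matrix.of fun i j => χ₂ (i, j) with hW
      have hA : V * Vᴴ = W * Wᴴ := by
        ext i k
        have h := congrFun (congrFun hmask2 i) k
        simpa [ptr2, proj4, Matrix.mul_apply, Matrix.conjTranspose_apply, hV, hW] using h
      have hB : Vᴴ * V = Wᴴ * W := by
        ext j l
        have h := congrArg star (congrFun (congrFun hmask1 j) l)
        simp only [ptr1, proj4, Matrix.of_apply, star_sum, star_mul', star_star] at h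
        simpa [Matrix.mul_apply, Matrix.conjTranspose_apply, hV, hW, mul_comm] using h
      have htrB : (Vᴴ * V).trace = 1 := by
        have h := h₁
        simp only [UnitVec, Fintype.sum_prod_type] at h
        simp only [Matrix.trace, Matrix.diag, Matrix.mul_apply, Matrix.conjTranspose_apply, hV,
          Matrix.of_apply, Fin.sum_univ_two]
        simp only [Fin.sum_univ_two] at h
        linear_combination h
      have htrT : (Vᴴ * W).trace = 0 := by
        have h := horth
        simp only [inner4, Fintype.sum_prod_type, Fin.sum_univ_two] at h
        simp only [Matrix.trace, Matrix.diag, Matrix.mul_apply, Matrix.conjTranspose_apply, hV, hW,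
          Matrix.of_apply, Fin.sum_univ_two]
        linear_combination h
      have hBhalf : Vᴴ * V = (1/2 : ℂ) • 1 := by
        apply core_matrix (Vᴴ * V) (Vᴴ * W)
        · simp [Matrix.conjTranspose_mul]
        · exact htrB
        · calc Vᴴ * W * (Vᴴ * V) = Vᴴ * W * (Wᴴ * W) := by rw [hB]
            _ = Vᴴ * (W * Wᴴ) * W := by noncomm_ring
            _ = Vᴴ * (V * Vᴴ) * W := by rw [hA]
            _ = Vᴴ * V * (Vᴴ * W) := by noncomm_ring
        · calc (Vᴴ * W)ᴴ * (Vᴴ * W) = Wᴴ * (V * Vᴴ) * W := by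
                simp [Matrix.conjTranspose_mul]; noncomm_ring
            _ = Wᴴ * (W * Wᴴ) * W := by rw [hA]
            _ = (Wᴴ * W) * (Wᴴ * W) := by noncomm_ring
            _ = (Vᴴ * V) * (Vᴴ * V) := by rw [hB]
        · exact htrT
      have hAhalf : V * Vᴴ = (1/2 : ℂ) • 1 := by
        apply core_matrix (V * Vᴴ) (W * Vᴴ)
        · simp [Matrix.conjTranspose_mul]
        · rw [Matrix.trace_mul_comm]; exact htrB
        · calc W * Vᴴ * (V * Vᴴ) = W * (Wᴴ * W) * Vᴴ := by rw [← hB]; noncomm_ring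
            _ = (W * Wᴴ) * (W * Vᴴ) := by noncomm_ring
            _ = (V * Vᴴ) * (W * Vᴴ) := by rw [hA]
        · calc (W * Vᴴ)ᴴ * (W * Vᴴ) = V * (Wᴴ * W) * Vᴴ := by
                simp [Matrix.conjTranspose_mul]; noncomm_ring
            _ = V * (Vᴴ * V) * Vᴴ := by rw [hB]
            _ = (V * Vᴴ) * (V * Vᴴ) := by noncomm_ring
        · rw [Matrix.trace_mul_comm]; exact htrT
      constructor
      · ext j l
        have e1 := congrFun (congrFun hmask1 j) l
        simp only [ptr1, proj4, Matrix.of_apply, Fin.sum_univ_two] at e1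
        have e2 := congrArg star (congrFun (congrFun hBhalf j) l)
        simp only [Matrix.mul_apply, Matrix.conjTranspose_apply, hV, Matrix.of_apply,
          Fin.sum_univ_two, star_add, star_mul', star_star, Matrix.smul_apply, Matrix.one_apply,
          star_one, star_zero, smul_eq_mul] at e2
        simp only [ptr1, mix, proj4, Matrix.add_apply, Matrix.smul_apply, Matrix.of_apply,
          smul_eq_mul, Fin.sum_univ_two, Matrix.smul_apply, Matrix.one_apply, smul_eq_mul]
        rcases eq_or_ne j l with h | h <;> simp [h] at e1 e2 ⊢ <;>
          push_cast <;> linear_combination ((p : ℂ) - 1) * e1 + e2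
      · ext i k
        have e1 := congrFun (congrFun hmask2 i) k
        simp only [ptr2, proj4, Matrix.of_apply, Fin.sum_univ_two] at e1
        have e2 := congrFun (congrFun hAhalf i) k
        simp only [Matrix.mul_apply, Matrix.conjTranspose_apply, hV, Matrix.of_apply,
          Fin.sum_univ_two, Matrix.smul_apply, Matrix.one_apply, smul_eq_mul] at e2
        simp only [ptr2, mix, proj4, Matrix.add_apply, Matrix.smul_apply, Matrix.of_apply,
          smul_eq_mul, Fin.sum_univ_two, Matrix.smul_apply, Matrix.one_apply, smul_eq_mul]
        push_cast
        linear_combination ((p : ℂ) - 1) * e1 + e2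
  have hchar : (mix χ₁ χ₂ p).charpoly
      = (X - C ((p : ℂ))) * (X - C (1 - (p : ℂ))) * X ^ 2 := by
      classical
      set i₀ : Fin 2 × Fin 2 := (0, 0) with hi₀
      set i₁ : Fin 2 × Fin 2 := (0, 1) with hi₁
      have hne : i₀ ≠ i₁ := by decide
      set χ₁' : EuclideanSpace ℂ (Fin 2 × Fin 2) := WithLp.toLp 2 χ₁ with hχ₁'
      set χ₂' : EuclideanSpace ℂ (Fin 2 × Fin 2) := WithLp.toLp 2 χ₂ with hχ₂'
      set v : (Fin 2 × Fin 2) → EuclideanSpace ℂ (Fin 2 × Fin 2) :=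
        fun i => if i = i₀ then χ₁' else if i = i₁ then χ₂' else 0 with hv
      have hinner : ∀ x y : EuclideanSpace ℂ (Fin 2 × Fin 2),
          (inner ℂ x y : ℂ) = ∑ r, star (x r) * y r := by
        intro x y; simp [PiLp.inner_apply, RCLike.inner_apply]; exact Finset.sum_congr rfl fun _ _ => mul_comm _ _
      have h11 : (inner ℂ χ₁' χ₁' : ℂ) = 1 := by
        rw [hinner]
        rw [show (1:ℂ) = ∑ i, χ₁ i * star (χ₁ i) from h₁.symm]
        exact Finset.sum_congr rfl fun i _ => mul_comm _ _
      have h22 : (inner ℂ χ₂' χ₂' : ℂ) = 1 := by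
        rw [hinner]
        rw [show (1:ℂ) = ∑ i, χ₂ i * star (χ₂ i) from h₂.symm]
        exact Finset.sum_congr rfl fun i _ => mul_comm _ _
      have h12 : (inner ℂ χ₁' χ₂' : ℂ) = 0 := by rw [hinner]; exact horth
      have h21 : (inner ℂ χ₂' χ₁' : ℂ) = 0 := by
        rw [← inner_conj_symm, h12, map_zero]
      have hn1 : ‖χ₁'‖ = 1 := by
        have h := h11; rw [inner_self_eq_norm_sq_to_K] at h; norm_cast at h
        exact (pow_eq_one_iff_of_nonneg (norm_nonneg _) two_ne_zero).mp
          (RCLike.ofReal_inj.mp (h.trans RCLike.ofReal_one.symm))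
      have hn2 : ‖χ₂'‖ = 1 := by
        have h := h22; rw [inner_self_eq_norm_sq_to_K] at h; norm_cast at h
        exact (pow_eq_one_iff_of_nonneg (norm_nonneg _) two_ne_zero).mp
          (RCLike.ofReal_inj.mp (h.trans RCLike.ofReal_one.symm))
      have hON : Orthonormal ℂ (({i₀, i₁} : Set (Fin 2 × Fin 2)).restrict v) := by
        rw [orthonormal_iff_ite]
        rintro ⟨i, hi⟩ ⟨j, hj⟩
        simp only [Set.mem_insert_iff, Set.mem_singleton_iff] at hi hj
        rcases hi with rfl | rfl <;> rcases hj with rfl | rfl <;>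
          simp [Set.restrict, hv, hne, hne.symm, Subtype.ext_iff, h11, h22, h12, h21, hn1, hn2]
      obtain ⟨b, hb⟩ := hON.exists_orthonormalBasis_extension_of_card_eq
        (by simp [Fintype.card_prod])
      have hb0 : b i₀ = χ₁' := by
        have := hb i₀ (by simp)
        simpa [hv] using this
      have hb1 : b i₁ = χ₂' := by
        have := hb i₁ (by simp)
        simpa [hv, hne, hne.symm] using this
      have hbON := b.orthonormal
      rw [orthonormal_iff_ite] at hbON
      set U : Matrix (Fin 2 × Fin 2) (Fin 2 × Fin 2) ℂ := Matrix.of fun r c => b c r with hU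
      have hUu : Uᴴ * U = 1 := by
        ext a c
        have := hbON a c
        rw [hinner] at this
        simpa [Matrix.mul_apply, Matrix.conjTranspose_apply, hU, Matrix.one_apply] using this
      have key1 : ∀ a, (∑ r, star (b a r) * χ₁ r) = if a = i₀ then 1 else 0 := by
        intro a
        have := hbON a i₀
        rw [hb0, hinner] at this
        simpa using this
      have key2 : ∀ a, (∑ r, star (b a r) * χ₂ r) = if a = i₁ then 1 else 0 := by
        intro a
        have := hbON a i₁
        rw [hb1, hinner] at this
        simpa using this
      have key1' : ∀ c, (∑ s, star (χ₁ s) * b c s) = if c = i₀ then 1 else 0 := by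
        intro c
        have := congrArg star (key1 c)
        simpa [star_sum, star_mul', mul_comm, apply_ite (star : ℂ → ℂ)] using this
      have key2' : ∀ c, (∑ s, star (χ₂ s) * b c s) = if c = i₁ then 1 else 0 := by
        intro c
        have := congrArg star (key2 c)
        simpa [star_sum, star_mul', mul_comm, apply_ite (star : ℂ → ℂ)] using this
      set d : Fin 2 × Fin 2 → ℂ :=
        fun i => if i = i₀ then (p : ℂ) else if i = i₁ then 1 - p else 0 with hd
      have hfact : ∀ (φ : (Fin 2 × Fin 2) → ℂ) (a c : Fin 2 × Fin 2),
          (∑ s, (∑ r, star (b a r) * (φ r * star (φ s))) * b c s)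
            = (∑ r, star (b a r) * φ r) * (∑ s, star (φ s) * b c s) := by
        intro φ a c
        rw [show (∑ r, star (b a r) * φ r) * (∑ s, star (φ s) * b c s)
            = ∑ s, ∑ r, (star (b a r) * φ r) * (star (φ s) * b c s) from by
          rw [Finset.sum_mul_sum]; exact Finset.sum_comm]
        refine Finset.sum_congr rfl fun s _ => ?_
        rw [Finset.sum_mul]
        exact Finset.sum_congr rfl fun r _ => by ring
      have hDiag : Uᴴ * (mix χ₁ χ₂ p) * U = Matrix.diagonal d := by
        ext a c
        have expand : (Uᴴ * (mix χ₁ χ₂ p) * U) a c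
            = (p : ℂ) * ((∑ r, star (b a r) * χ₁ r) * (∑ s, star (χ₁ s) * b c s))
              + (1 - (p : ℂ)) * ((∑ r, star (b a r) * χ₂ r) * (∑ s, star (χ₂ s) * b c s)) := by
          rw [← hfact χ₁ a c, ← hfact χ₂ a c]
          simp only [Matrix.mul_apply, Matrix.conjTranspose_apply, hU, Matrix.of_apply,
            mix, proj4, Matrix.add_apply, Matrix.smul_apply, smul_eq_mul,
            Finset.mul_sum, Finset.sum_mul]
          rw [← Finset.sum_add_distrib]
          refine Finset.sum_congr rfl fun s _ => ?_
          rw [← Finset.sum_add_distrib]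
          refine Finset.sum_congr rfl fun r _ => ?_
          ring
        rw [expand, key1, key2, key1', key2', Matrix.diagonal_apply]
        rcases eq_or_ne a i₀ with rfl | h0
        · rcases eq_or_ne c i₀ with rfl | h1
          · simp [hne, hd]
          · simp [hne, h1, Ne.symm h1]
        · rcases eq_or_ne a i₁ with rfl | h2
          · rcases eq_or_ne c i₁ with rfl | h3
            · simp [hne.symm, hd]
            · simp [hne.symm, h3, Ne.symm h3]
          · simp [h0, h2, hd]
      have hUu2 : U * Uᴴ = 1 := mul_eq_one_comm.mp hUu
      have hmixeq : mix χ₁ χ₂ p = U * Matrix.diagonal d * Uᴴ := by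
        rw [← hDiag]
        calc mix χ₁ χ₂ p = 1 * mix χ₁ χ₂ p * 1 := by rw [Matrix.one_mul, Matrix.mul_one]
          _ = (U * Uᴴ) * mix χ₁ χ₂ p * (U * Uᴴ) := by rw [hUu2]
          _ = U * (Uᴴ * mix χ₁ χ₂ p * U) * Uᴴ := by noncomm_ring
      rw [hmixeq, charpoly_unitary_conj _ _ hUu, charpoly_diag]
      rw [show (Finset.univ : Finset (Fin 2 × Fin 2)) = {(0,0), (0,1), (1,0), (1,1)} by decide]
      rw [Finset.prod_insert (by decide), Finset.prod_insert (by decide),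
        Finset.prod_insert (by decide), Finset.prod_singleton]
      have e0 : d (0,0) = (p : ℂ) := by simp [hd, hi₀, hi₁]
      have e1 : d (0,1) = 1 - (p : ℂ) := by simp [hd, hi₀, hi₁]
      have e2 : d (1,0) = 0 := by simp [hd, hi₀, hi₁]
      have e3 : d (1,1) = 0 := by
        simp only [hd, hi₀, hi₁]
        rw [if_neg (by decide), if_neg (by decide)]
      rw [e0, e1, e2, e3]
      simp only [map_zero, sub_zero]
      ring
  have hent : (p ≠ 1/2 → -(p * Real.logb 2 p) - (1 - p) * Real.logb 2 (1 - p) < 1) ∧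
      (p = 1/2 → -(p * Real.logb 2 p) - (1 - p) * Real.logb 2 (1 - p) = 1) := by
      have hlog2 : (0:ℝ) < Real.log 2 := Real.log_pos (by norm_num)
      have hval : -(p * Real.logb 2 p) - (1 - p) * Real.logb 2 (1 - p)
          = Real.binEntropy p / Real.log 2 := by
        rw [Real.binEntropy_eq_negMulLog_add_negMulLog_one_sub]
        simp only [Real.negMulLog, Real.logb]
        ring
      constructor
      · intro hp
        rw [hval, div_lt_one hlog2]
        exact Real.binEntropy_lt_log_two.mpr (by rw [show (2:ℝ)⁻¹ = 1/2 by norm_num]; exact hp)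
      · intro hp
        rw [hval, div_eq_one_iff_eq (ne_of_gt hlog2)]
        rw [hp, show (1:ℝ)/2 = 2⁻¹ by norm_num, Real.binEntropy_two_inv]
  exact ⟨hmarg.1, hmarg.2, hchar, hent.1, hent.2⟩


end
end

section
/- Let χ₁ and χ₂ be orthonormal vectors in ℂ²⊗ℂ² whose rank-one projections have equal partial traces on both subsystems (Tr₁ |χ₁⟩⟨χ₁| = Tr₁ |χ₂⟩⟨χ₂| and Tr₂ |χ₁⟩⟨χ₁| = Tr₂ |χ₂⟩⟨χ₂|). Then for every p ∈ [0,1] with p ≠ 1/2, the two-qubit state ρ(p) = p|χ₁⟩⟨χ₁| + (1−p)|χ₂⟩⟨χ₂| is NOT separable (it is entangled). That is, the masked states of classical mixtures of two single-qubit pure orthogonal states are entangled for all unequal mixing weights. -/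
open Matrix Kronecker Polynomial ComplexOrder

noncomputable section

namespace MaskedAux

abbrev M2 := Matrix (Fin 2) (Fin 2) ℂ

def Jm : M2 := !![0, 1; -1, 0]

lemma sq_eq (M : M2) : M * M = M.trace • M - M.det • 1 := by
  ext i j
  fin_cases i <;> fin_cases j <;>
    simp [Matrix.mul_apply, Matrix.trace, Matrix.diag, Fin.sum_univ_two,
      Matrix.det_fin_two, Matrix.one_apply] <;> ring

lemma jlem (A : M2) : Jm * A * Jm = Aᵀ - A.trace • 1 := by
  ext i j
  fin_cases i <;> fin_cases j <;>
    simp [Jm, Matrix.mul_apply, Matrix.vecMul, dotProduct, Matrix.trace, Matrix.diag,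
      Fin.sum_univ_two, Matrix.one_apply] <;> ring

lemma map_star_mul (A B : M2) : (A * B).map star = A.map star * B.map star := by
  ext i j
  simp [Matrix.mul_apply, Matrix.map_apply, star_sum, star_mul']

lemma jm_sq : Jm * Jm = (-1 : M2) := by
  ext i j
  fin_cases i <;> fin_cases j <;>
    simp [Jm, Matrix.mul_apply, Fin.sum_univ_two, Matrix.one_apply]

lemma kron_quad_nonneg (A B : M2) (hA : A.PosSemidef) (hB : B.PosSemidef)
    (φ : Fin 2 × Fin 2 → ℂ) : 0 ≤ star φ ⬝ᵥ (A ⊗ₖ B) *ᵥ φ := by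
  obtain ⟨P, hP⟩ : ∃ P : M2, A = Pᴴ * P := by
    open scoped MatrixOrder in exact CStarAlgebra.nonneg_iff_eq_star_mul_self.mp hA.nonneg
  obtain ⟨Q, hQ⟩ : ∃ Q : M2, B = Qᴴ * Q := by
    open scoped MatrixOrder in exact CStarAlgebra.nonneg_iff_eq_star_mul_self.mp hB.nonneg
  have hk : A ⊗ₖ B = (P ⊗ₖ Q)ᴴ * (P ⊗ₖ Q) := by
    rw [hP, hQ, Matrix.mul_kronecker_mul]
    congr 1
    ext q r
    simp [Matrix.conjTranspose_apply, star_mul']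
  rw [hk]
  exact (Matrix.posSemidef_conjTranspose_mul_self _).dotProduct_mulVec_nonneg φ
lemma expand_sq (A : M2) (c : ℂ) :
    (A - c • 1) * (A - c • 1) = A * A - (2 * c) • A + (c * c) • 1 := by
  have e1 : (c • (1 : M2)) * (c • 1) = (c * c) • 1 := by
    rw [Matrix.smul_mul, Matrix.mul_smul, smul_smul, Matrix.one_mul]
  rw [Matrix.sub_mul, Matrix.mul_sub, Matrix.mul_sub, e1, Matrix.mul_smul, Matrix.mul_one,
    Matrix.smul_mul, Matrix.one_mul]
  module

lemma herm_nilp (N : M2) (hH : Nᴴ = N) (hNN : N * N = 0) : N = 0 := by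
  have e00 : N 0 0 * N 0 0 + N 0 1 * N 1 0 = 0 := by
    simpa [Matrix.mul_apply, Fin.sum_univ_two] using Matrix.ext_iff.mpr hNN 0 0
  have e11 : N 1 0 * N 0 1 + N 1 1 * N 1 1 = 0 := by
    simpa [Matrix.mul_apply, Fin.sum_univ_two] using Matrix.ext_iff.mpr hNN 1 1
  have hs01 : N 1 0 = star (N 0 1) := by
    simpa [Matrix.conjTranspose_apply] using (Matrix.ext_iff.mpr hH 1 0).symm
  have hs00 : star (N 0 0) = N 0 0 := by
    simpa [Matrix.conjTranspose_apply] using Matrix.ext_iff.mpr hH 0 0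
  have hs11 : star (N 1 1) = N 1 1 := by
    simpa [Matrix.conjTranspose_apply] using Matrix.ext_iff.mpr hH 1 1
  have him00 : (N 0 0).im = 0 := Complex.conj_eq_iff_im.mp hs00
  have him11 : (N 1 1).im = 0 := Complex.conj_eq_iff_im.mp hs11
  rw [hs01] at e00
  have e00' : N 0 0 * N 0 0 + (Complex.normSq (N 0 1) : ℂ) = 0 := by
    rw [← Complex.mul_conj]; exact e00
  have hre : (N 0 0).re ^ 2 + Complex.normSq (N 0 1) = 0 := by
    have := congrArg Complex.re e00'
    simpa [Complex.mul_re, him00, pow_two] using this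
  have h00re : (N 0 0).re = 0 := by
    nlinarith [Complex.normSq_nonneg (N 0 1), sq_nonneg ((N 0 0).re)]
  have hnsq : Complex.normSq (N 0 1) = 0 := by nlinarith [sq_nonneg ((N 0 0).re)]
  have hN01 : N 0 1 = 0 := Complex.normSq_eq_zero.mp hnsq
  have hN00 : N 0 0 = 0 := Complex.ext h00re him00
  have hN10 : N 1 0 = 0 := by rw [hs01, hN01, star_zero]
  have hN11 : N 1 1 = 0 := by
    have h : N 1 1 * N 1 1 = 0 := by rw [hN10] at e11; simpa using e11
    exact mul_self_eq_zero.mp h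
  ext i j
  fin_cases i <;> fin_cases j <;> simp [hN00, hN01, hN10, hN11]

lemma core (X Y : M2)
    (hA : X * Xᴴ = Y * Yᴴ) (hB : Xᴴ * X = Yᴴ * Y)
    (h1 : (X * Xᴴ).trace = 1) (ho : (Xᴴ * Y).trace = 0) :
    X.det * star X.det = 1/4 ∧ X * Xᴴ = ((1:ℂ)/2) • 1 ∧
      ((Xᴴ * Y)ᴴ * (Xᴴ * Y)).trace = 1/2 := by
  obtain ⟨d, hd⟩ : ∃ d, d = X.det * star X.det := ⟨_, rfl⟩
  obtain ⟨C, hCdef⟩ : ∃ C, C = Xᴴ * Y := ⟨_, rfl⟩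
  obtain ⟨S, hSdef⟩ : ∃ S, S = Xᴴ * X := ⟨_, rfl⟩
  have hdY : Y.det * star Y.det = d := by
    have h := congrArg Matrix.det hB
    simp only [Matrix.det_mul, Matrix.det_conjTranspose] at h
    rw [hd]; linear_combination -h
  have hS1 : S.trace = 1 := by rw [hSdef, Matrix.trace_mul_comm]; exact h1
  have hSdet : S.det = d := by
    rw [hSdef, Matrix.det_mul, Matrix.det_conjTranspose, hd]; ring
  have hoC : C.trace = 0 := by rw [hCdef]; exact ho
  have hoc : Cᴴ.trace = 0 := by rw [Matrix.trace_conjTranspose, hoC, star_zero]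
  have hCdet : C.det = star X.det * Y.det := by
    rw [hCdef, Matrix.det_mul, Matrix.det_conjTranspose]
  have hstar : star C.det * C.det = d * d := by
    rw [hCdet, star_mul', star_star]
    linear_combination (Matrix.det X * star (Matrix.det X)) * hdY - d * hd
  have hCH : Cᴴ = Yᴴ * X := by
    rw [hCdef, Matrix.conjTranspose_mul, Matrix.conjTranspose_conjTranspose]
  have hCC : Cᴴ * C = S * S := by
    rw [hCH, hCdef, hSdef]
    calc Yᴴ * X * (Xᴴ * Y) = Yᴴ * ((X * Xᴴ) * Y) := by simp only [mul_assoc]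
    _ = Yᴴ * ((Y * Yᴴ) * Y) := by rw [hA]
    _ = (Yᴴ * Y) * (Yᴴ * Y) := by simp only [mul_assoc]
    _ = (Xᴴ * X) * (Xᴴ * X) := by rw [← hB]
  have hCCt : C * Cᴴ = S * S := by
    rw [hCH, hCdef, hSdef]
    calc Xᴴ * Y * (Yᴴ * X) = Xᴴ * ((Y * Yᴴ) * X) := by simp only [mul_assoc]
    _ = Xᴴ * ((X * Xᴴ) * X) := by rw [← hA]
    _ = (Xᴴ * X) * (Xᴴ * X) := by simp only [mul_assoc]
  have hC2 : C * C = -(C.det • (1 : M2)) := by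
    have h := sq_eq C
    rw [hoC, zero_smul, zero_sub] at h
    exact h
  have hC'2 : Cᴴ * Cᴴ = -(star C.det • (1 : M2)) := by
    have h := sq_eq Cᴴ
    rw [hoc, zero_smul, zero_sub, Matrix.det_conjTranspose] at h
    exact h
  have hSq : S * S = S - d • 1 := by
    rw [sq_eq S, hS1, hSdet, one_smul]
  have hTrS2 : (S * S).trace = 1 - 2 * d := by
    rw [hSq, Matrix.trace_sub, Matrix.trace_smul, hS1, Matrix.trace_one]
    simp [smul_eq_mul]; ring
  have t1 : (Cᴴ * Cᴴ * (C * C)).trace = 2 * (d * d) := by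
    rw [hC2, hC'2]
    simp only [neg_mul, mul_neg, neg_neg, Matrix.smul_mul, Matrix.mul_smul,
      smul_smul, Matrix.one_mul, Matrix.trace_smul, Matrix.trace_one, Matrix.trace_neg,
      smul_neg, smul_eq_mul, neg_neg, Fintype.card_fin]
    linear_combination 2 * hstar
  have t2 : (Cᴴ * Cᴴ * (C * C)).trace = (S * S * (S * S)).trace := by
    calc (Cᴴ * Cᴴ * (C * C)).trace = (Cᴴ * ((Cᴴ * C) * C)).trace := by
          rw [mul_assoc, ← mul_assoc Cᴴ C C]
    _ = ((Cᴴ * C) * (C * Cᴴ)).trace := by rw [Matrix.trace_mul_comm, mul_assoc]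
    _ = (S * S * (S * S)).trace := by rw [hCC, hCCt]
  have t3 : (S * S * (S * S)).trace = 1 - 4 * d + 2 * (d * d) := by
    rw [hSq, expand_sq, hSq]
    rw [Matrix.trace_add, Matrix.trace_sub, Matrix.trace_sub, Matrix.trace_smul,
      Matrix.trace_smul, Matrix.trace_smul, Matrix.trace_one, hS1]
    simp [smul_eq_mul]; ring
  have hd14 : d = 1/4 := by
    have h := t1.symm.trans (t2.trans t3)
    linear_combination h / 4
  refine ⟨by rw [← hd, hd14], ?_, ?_⟩
  · have hPdet : (X * Xᴴ).det = d := by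
      rw [Matrix.det_mul, Matrix.det_conjTranspose, hd]
    have hP2 : (X * Xᴴ) * (X * Xᴴ) = (X * Xᴴ) - (1/4 : ℂ) • 1 := by
      rw [sq_eq (X * Xᴴ), h1, hPdet, hd14, one_smul]
    have hHerm : (X * Xᴴ - ((1:ℂ)/2) • 1)ᴴ = X * Xᴴ - ((1:ℂ)/2) • 1 := by
      rw [Matrix.conjTranspose_sub, Matrix.conjTranspose_smul, Matrix.conjTranspose_mul,
        Matrix.conjTranspose_conjTranspose, Matrix.conjTranspose_one]
      norm_num
    have hNsq : (X * Xᴴ - ((1:ℂ)/2) • 1) * (X * Xᴴ - ((1:ℂ)/2) • 1) = 0 := by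
      rw [expand_sq, hP2]
      match_scalars <;> ring
    have h0 := herm_nilp _ hHerm hNsq
    rw [sub_eq_zero] at h0
    exact h0
  · rw [← hCdef, hCC, hTrS2, hd14]
    norm_num


def Wval (ρ : Matrix (Fin 2 × Fin 2) (Fin 2 × Fin 2) ℂ) (φ : Fin 2 × Fin 2 → ℂ) : ℂ :=
  ∑ q : Fin 2 × Fin 2, ∑ r : Fin 2 × Fin 2, star (φ q) * ρ (q.1, r.2) (r.1, q.2) * φ r

lemma Wval_sum {n : ℕ} (f : Fin n → Matrix (Fin 2 × Fin 2) (Fin 2 × Fin 2) ℂ)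
    (φ : Fin 2 × Fin 2 → ℂ) : Wval (∑ i, f i) φ = ∑ i, Wval (f i) φ := by
  unfold Wval
  simp only [Matrix.sum_apply, Finset.mul_sum, Finset.sum_mul]
  exact (Finset.sum_congr rfl fun q _ => Finset.sum_comm).trans Finset.sum_comm

lemma Wval_smul (c : ℂ) (ρ : Matrix (Fin 2 × Fin 2) (Fin 2 × Fin 2) ℂ)
    (φ : Fin 2 × Fin 2 → ℂ) : Wval (c • ρ) φ = c * Wval ρ φ := by
  unfold Wval
  simp only [Matrix.smul_apply, smul_eq_mul, Finset.mul_sum]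
  refine Finset.sum_congr rfl fun q _ => ?_
  refine Finset.sum_congr rfl fun r _ => ?_
  ring

lemma Wval_add (ρ σ : Matrix (Fin 2 × Fin 2) (Fin 2 × Fin 2) ℂ)
    (φ : Fin 2 × Fin 2 → ℂ) : Wval (ρ + σ) φ = Wval ρ φ + Wval σ φ := by
  unfold Wval
  simp only [Matrix.add_apply, mul_add, add_mul, Finset.sum_add_distrib]

lemma Wval_kron (A B : M2) (φ : Fin 2 × Fin 2 → ℂ) :
    Wval (A ⊗ₖ B) φ = star φ ⬝ᵥ (A ⊗ₖ Bᵀ) *ᵥ φ := by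
  unfold Wval
  simp only [dotProduct, Matrix.mulVec, Matrix.kroneckerMap_apply,
    Matrix.transpose_apply, Pi.star_apply]
  refine Finset.sum_congr rfl fun q _ => ?_
  rw [Finset.mul_sum]
  refine Finset.sum_congr rfl fun r _ => ?_
  ring

lemma Wval_nonneg (ρ : Matrix (Fin 2 × Fin 2) (Fin 2 × Fin 2) ℂ) (hsep : Separable4 ρ)
    (φ : Fin 2 × Fin 2 → ℂ) : 0 ≤ Wval ρ φ := by
  obtain ⟨n, w, A, B, hw, -, hAd, hBd, hρ⟩ := hsep
  rw [hρ, Wval_sum]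
  refine Finset.sum_nonneg fun i _ => ?_
  rw [Wval_smul, Wval_kron]
  refine mul_nonneg ?_ (kron_quad_nonneg _ _ (hAd i).1 ((hBd i).1.transpose) φ)
  rw [Complex.le_def]
  simp [hw i]

lemma wval_proj (χ : Fin 2 × Fin 2 → ℂ) (Fb : M2) :
    Wval (proj4 χ) (fun q => star (Fb q.1 q.2)) =
    (((Matrix.of fun i j => χ (i, j))ᵀ * Fb) *
      (((Matrix.of fun i j => χ (i, j))ᵀ * Fb).map star)).trace := by
  unfold Wval
  simp only [proj4, Matrix.of_apply, Matrix.trace, Matrix.diag, Matrix.mul_apply,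
    Matrix.map_apply, Matrix.transpose_apply, Fintype.sum_prod_type, Fin.sum_univ_two,
    star_star, star_add, star_mul']
  ring

lemma smul_map_star (c : ℂ) (A : M2) : (c • A).map star = star c • A.map star := by
  ext i j
  simp [Matrix.map_apply, star_mul']

lemma jm_map_star : Jm.map star = Jm := by
  ext i j
  fin_cases i <;> fin_cases j <;> simp [Jm, Matrix.map_apply]

lemma map_star_star (A : M2) : (A.map star).map star = A := by
  ext i j; simp [Matrix.map_apply]

lemma transpose_map_star (A : M2) : Aᵀ.map star = Aᴴ := by
  ext i j; simp [Matrix.map_apply, Matrix.conjTranspose_apply]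

lemma conjTranspose_transpose' (A : M2) : Aᴴᵀ = A.map star := by
  ext i j; simp [Matrix.map_apply, Matrix.conjTranspose_apply]

lemma tr_trans_star (C : M2) : (Cᵀ * C.map star).trace = (Cᴴ * C).trace := by
  simp only [Matrix.trace, Matrix.diag, Matrix.mul_apply, Matrix.conjTranspose_apply,
    Matrix.transpose_apply, Matrix.map_apply, Fin.sum_univ_two]
  ring

lemma main_half (χ₁ χ₂ : Fin 2 × Fin 2 → ℂ)
    (h₁ : UnitVec χ₁) (horth : inner4 χ₁ χ₂ = 0)
    (hmask1 : ptr1 (proj4 χ₁) = ptr1 (proj4 χ₂))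
    (hmask2 : ptr2 (proj4 χ₁) = ptr2 (proj4 χ₂))
    (p : ℝ) (hp2 : 1/2 < p) : ¬ Separable4 (mix χ₁ χ₂ p) := by
  intro hsep
  obtain ⟨X, hX⟩ : ∃ X : M2, X = Matrix.of (fun i j => χ₁ (i, j)) := ⟨_, rfl⟩
  obtain ⟨Y, hY⟩ : ∃ Y : M2, Y = Matrix.of (fun i j => χ₂ (i, j)) := ⟨_, rfl⟩
  have hXe : ∀ i j, X i j = χ₁ (i, j) := by rw [hX]; intro i j; rfl
  have hYe : ∀ i j, Y i j = χ₂ (i, j) := by rw [hY]; intro i j; rfl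
  -- translate hypotheses
  have hA : X * Xᴴ = Y * Yᴴ := by
    ext i k
    have h := Matrix.ext_iff.mpr hmask2 i k
    simp only [ptr2, proj4, Matrix.of_apply, Fin.sum_univ_two] at h
    simp only [Matrix.mul_apply, Matrix.conjTranspose_apply, hXe, hYe, Fin.sum_univ_two]
    linear_combination h
  have hB : Xᴴ * X = Yᴴ * Y := by
    ext j l
    have h := congrArg star (Matrix.ext_iff.mpr hmask1 j l)
    simp only [ptr1, proj4, Matrix.of_apply, Fin.sum_univ_two, star_add, star_mul',
      star_star] at h
    simp only [Matrix.mul_apply, Matrix.conjTranspose_apply, hXe, hYe, Fin.sum_univ_two]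
    linear_combination h
  have h1 : (X * Xᴴ).trace = 1 := by
    have h := h₁
    simp only [UnitVec, Fintype.sum_prod_type, Fin.sum_univ_two] at h
    simp only [Matrix.trace, Matrix.diag, Matrix.mul_apply, Matrix.conjTranspose_apply,
      hXe, Fin.sum_univ_two]
    linear_combination h
  have ho : (Xᴴ * Y).trace = 0 := by
    have h := horth
    simp only [inner4, Fintype.sum_prod_type, Fin.sum_univ_two] at h
    simp only [Matrix.trace, Matrix.diag, Matrix.mul_apply, Matrix.conjTranspose_apply,
      hXe, hYe, Fin.sum_univ_two]
    linear_combination h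
  obtain ⟨hd, hXX, hCtr⟩ := core X Y hA hB h1 ho
  -- the witness
  obtain ⟨Fb, hFb⟩ : ∃ Fb : M2, Fb = Xᵀ.adjugate * Jm := ⟨_, rfl⟩
  have hW := Wval_nonneg _ hsep (fun q => star (Fb q.1 q.2))
  -- value on proj4 χ₁
  have hW1 : Wval (proj4 χ₁) (fun q => star (Fb q.1 q.2)) = -(1/2) := by
    rw [wval_proj χ₁ Fb, ← hX]
    have hM1 : Xᵀ * Fb = X.det • Jm := by
      rw [hFb, ← mul_assoc, Matrix.mul_adjugate, Matrix.det_transpose, Matrix.smul_mul,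
        Matrix.one_mul]
    rw [hM1, smul_map_star, jm_map_star, Matrix.smul_mul, Matrix.mul_smul, smul_smul,
      jm_sq, Matrix.trace_smul, Matrix.trace_neg, Matrix.trace_one]
    rw [hd]
    simp
    norm_num
  -- value on proj4 χ₂
  have hW2 : Wval (proj4 χ₂) (fun q => star (Fb q.1 q.2)) = 1/2 := by
    rw [wval_proj χ₂ Fb, ← hY]
    have hadj : X.adjugate = (2 * X.det) • Xᴴ := by
      have h2 : ((2:ℂ) • (X * Xᴴ)) = (1 : M2) := by
        rw [hXX, smul_smul]; norm_num
      calc X.adjugate = X.adjugate * ((2:ℂ) • (X * Xᴴ)) := by rw [h2, Matrix.mul_one]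
      _ = (2:ℂ) • ((X.adjugate * X) * Xᴴ) := by
            rw [Matrix.mul_smul, mul_assoc]
      _ = (2:ℂ) • ((X.det • (1 : M2)) * Xᴴ) := by rw [Matrix.adjugate_mul]
      _ = (2 * X.det) • Xᴴ := by rw [Matrix.smul_mul, Matrix.one_mul, smul_smul]
    have hFb2 : Fb = (2 * X.det) • (X.map star * Jm) := by
      rw [hFb, ← Matrix.adjugate_transpose, hadj, Matrix.transpose_smul, Matrix.smul_mul,
        conjTranspose_transpose']
    have hM2 : Yᵀ * Fb = (2 * X.det) • (Yᵀ * (X.map star * Jm)) := by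
      rw [hFb2, Matrix.mul_smul]
    have hM2s : (Yᵀ * Fb).map star
        = (2 * star X.det) • (Yᴴ * (X * Jm)) := by
      rw [hM2, smul_map_star, map_star_mul, map_star_mul, map_star_star, jm_map_star,
        transpose_map_star, star_mul']
      norm_num
    rw [hM2s, hM2, Matrix.smul_mul, Matrix.mul_smul, smul_smul, Matrix.trace_smul]
    have hK : (Yᵀ * (X.map star * Jm) * (Yᴴ * (X * Jm))).trace = 1/2 := by
      have e1 : Yᵀ * (X.map star * Jm) = (Xᴴ * Y)ᵀ * Jm := by
        rw [Matrix.transpose_mul, conjTranspose_transpose', mul_assoc]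
      have e2 : Yᴴ * (X * Jm) = (Xᴴ * Y)ᴴ * Jm := by
        rw [Matrix.conjTranspose_mul, Matrix.conjTranspose_conjTranspose, mul_assoc]
      rw [e1, e2]
      have hoc : (Xᴴ * Y)ᴴ.trace = 0 := by
        rw [Matrix.trace_conjTranspose, ho, star_zero]
      have e3 : (Xᴴ * Y)ᵀ * Jm * ((Xᴴ * Y)ᴴ * Jm)
          = (Xᴴ * Y)ᵀ * (Jm * (Xᴴ * Y)ᴴ * Jm) := by
        simp only [mul_assoc]
      rw [e3, jlem, hoc, zero_smul, sub_zero, conjTranspose_transpose', tr_trans_star]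
      exact hCtr
    rw [hK]
    simp only [smul_eq_mul]
    linear_combination 2 * hd
  -- combine
  have hsplit : Wval (mix χ₁ χ₂ p) (fun q => star (Fb q.1 q.2))
      = (p : ℂ) * Wval (proj4 χ₁) (fun q => star (Fb q.1 q.2))
        + (1 - (p : ℂ)) * Wval (proj4 χ₂) (fun q => star (Fb q.1 q.2)) := by
    unfold mix
    rw [Wval_add, Wval_smul, Wval_smul]
  rw [hsplit, hW1, hW2] at hW
  have hval : (p : ℂ) * -(1/2) + (1 - (p : ℂ)) * (1/2) = (((1:ℝ)/2 - p : ℝ) : ℂ) := by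
    push_cast
    ring
  rw [hval] at hW
  rw [Complex.zero_le_real] at hW
  linarith


end MaskedAux

/-- masked mixtures of two orthogonal pure qubit states are entangled
(not separable) for every unequal mixing weight p ≠ 1/2. -/
theorem masked_mixture_of_orthogonal_states_entangled
    (χ₁ χ₂ : Fin 2 × Fin 2 → ℂ)
    (h₁ : UnitVec χ₁) (h₂ : UnitVec χ₂)
    (horth : inner4 χ₁ χ₂ = 0)
    (hmask1 : ptr1 (proj4 χ₁) = ptr1 (proj4 χ₂))
    (hmask2 : ptr2 (proj4 χ₁) = ptr2 (proj4 χ₂))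
    (p : ℝ) (hp : p ∈ Set.Icc (0 : ℝ) 1) (hp' : p ≠ 1/2) :
    ¬ Separable4 (mix χ₁ χ₂ p) := by
  open MaskedAux in
  rcases lt_trichotomy p (1/2) with hlt | heq | hgt
  · have horth' : inner4 χ₂ χ₁ = 0 := by
      have h := congrArg star horth
      rw [star_zero] at h
      rw [inner4, ← h, inner4, star_sum]
      refine Finset.sum_congr rfl fun q _ => ?_
      rw [star_mul', star_star]
      ring
    have hmix : mix χ₁ χ₂ p = mix χ₂ χ₁ (1 - p) := by
      ext q r
      simp only [mix, Matrix.add_apply, Matrix.smul_apply, smul_eq_mul]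
      push_cast
      ring
    rw [hmix]
    exact main_half χ₂ χ₁ h₂ horth' hmask1.symm hmask2.symm (1 - p) (by linarith)
  · exact absurd heq hp'
  · exact main_half χ₁ χ₂ h₁ horth hmask1 hmask2 p hgt


end
end

section
/- Let χ₁ and χ₂ be orthonormal vectors in ℂ²⊗ℂ² whose rank-one projections have equal partial traces on both subsystems (Tr₁ |χ₁⟩⟨χ₁| = Tr₁ |χ₂⟩⟨χ₂| and Tr₂ |χ₁⟩⟨χ₁| = Tr₂ |χ₂⟩⟨χ₂|). Then the equal mixture ρ(1/2) = (1/2)|χ₁⟩⟨χ₁| + (1/2)|χ₂⟩⟨χ₂| IS separable. Combined with the entanglement of ρ(p) for p ≠ 1/2, this shows that entanglement in the masked states is necessary and sufficient for masking two arbitrary single-qubit commuting mixed states: the masked mixture is separable exactly when the input state is the equal mixture. -/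
open Matrix Kronecker Polynomial ComplexOrder

noncomputable section

/-! Auxiliary lemmas -/

lemma proj2_density (a : Fin 2 → ℂ) (ha : UnitVec a) : IsDensity2 (proj2 a) := by
  constructor
  · rw [posSemidef_iff_dotProduct_mulVec]; constructor
    · ext i j
      simp only [proj2, conjTranspose_apply, Matrix.of_apply, star_mul', star_star]
      ring
    · intro x
      have key : star x ⬝ᵥ (proj2 a) *ᵥ x
          = ((starRingEnd ℂ) (x 0) * a 0 + (starRingEnd ℂ) (x 1) * a 1) *
            (starRingEnd ℂ) ((starRingEnd ℂ) (x 0) * a 0 + (starRingEnd ℂ) (x 1) * a 1) := by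
        simp only [dotProduct, mulVec, proj2, Matrix.of_apply, Fin.sum_univ_two,
          Pi.star_apply, RCLike.star_def, map_add, _root_.map_mul, Complex.conj_conj]
        ring
      rw [key]
      exact mul_star_self_nonneg _
  · have := ha
    simp only [UnitVec, Fin.sum_univ_two] at this
    simpa [Matrix.trace_fin_two, proj2] using this
lemma Qhalf (Q C : Matrix (Fin 2) (Fin 2) ℂ) (hQ : Qᴴ = Q) (htQ : Q.trace = 1)
    (htC : C.trace = 0) (hcomm : C * Q = Q * C) (hCC : Cᴴ * C = Q * Q) :
    Q = (1/2 : ℂ) • 1 := by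
  set q0 := Q 0 0 with hq0
  set q1 := Q 0 1 with hq1
  set q2 := Q 1 0 with hq2
  set q3 := Q 1 1 with hq3
  set c0 := C 0 0 with hc0
  set c1 := C 0 1 with hc1
  set c2 := C 1 0 with hc2
  set c3 := C 1 1 with hc3
  have conj0 : (starRingEnd ℂ) q0 = q0 := by
    have := congrFun (congrFun hQ 0) 0; simpa [conjTranspose_apply] using this
  have conj3 : (starRingEnd ℂ) q3 = q3 := by
    have := congrFun (congrFun hQ 1) 1; simpa [conjTranspose_apply] using this
  have conj12 : (starRingEnd ℂ) q1 = q2 := by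
    have := congrFun (congrFun hQ 1) 0; simpa [conjTranspose_apply] using this
  have conj21 : (starRingEnd ℂ) q2 = q1 := by
    rw [← conj12]; simp
  have htQ' : q0 + q3 = 1 := by simpa [Matrix.trace_fin_two] using htQ
  have htC' : c0 + c3 = 0 := by simpa [Matrix.trace_fin_two] using htC
  have comm01 : c0 * q1 + c1 * q3 = q0 * c1 + q1 * c3 := by
    have := congrFun (congrFun hcomm 0) 1
    simpa [Matrix.mul_apply, Fin.sum_univ_two] using this
  have comm10 : c2 * q0 + c3 * q2 = q2 * c0 + q3 * c2 := by
    have := congrFun (congrFun hcomm 1) 0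
    simpa [Matrix.mul_apply, Fin.sum_univ_two] using this
  have S00 : (starRingEnd ℂ) c0 * c0 + (starRingEnd ℂ) c2 * c2 = q0 * q0 + q1 * q2 := by
    have := congrFun (congrFun hCC 0) 0
    simpa [Matrix.mul_apply, Fin.sum_univ_two, conjTranspose_apply] using this
  have S01 : (starRingEnd ℂ) c0 * c1 + (starRingEnd ℂ) c2 * c3 = q0 * q1 + q1 * q3 := by
    have := congrFun (congrFun hCC 0) 1
    simpa [Matrix.mul_apply, Fin.sum_univ_two, conjTranspose_apply] using this
  have S11 : (starRingEnd ℂ) c1 * c1 + (starRingEnd ℂ) c3 * c3 = q2 * q1 + q3 * q3 := by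
    have := congrFun (congrFun hCC 1) 1
    simpa [Matrix.mul_apply, Fin.sum_univ_two, conjTranspose_apply] using this
  have key : q1 = 0 ∧ q0 = q3 := by
    by_cases hd : q0 = q3
    · refine ⟨?_, hd⟩
      by_contra hq1ne
      have hc0z : c0 = 0 := by
        have h2 : q1 * (2 * c0) = 0 := by linear_combination comm01 + c1 * hd + q1 * htC'
        rcases mul_eq_zero.mp h2 with h | h
        · exact absurd h hq1ne
        · linear_combination h / 2
      have hc3z : c3 = 0 := by linear_combination htC' - hc0z
      have : q1 = 0 := by
        have hs := S01
        rw [hc0z, hc3z] at hs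
        simp at hs
        linear_combination -hs - q1 * htQ'
      exact hq1ne this
    · exfalso
      have hdne : q0 - q3 ≠ 0 := fun h => hd (by linear_combination h)
      have e1 : (q0 - q3) * c1 = 2 * q1 * c0 := by
        linear_combination -comm01 - q1 * htC'
      have e2 : (q0 - q3) * c2 = 2 * q2 * c0 := by
        linear_combination comm10 - q2 * htC'
      have e2c : (q0 - q3) * (starRingEnd ℂ) c2 = 2 * q1 * (starRingEnd ℂ) c0 := by
        have h := congrArg (starRingEnd ℂ) e2
        simp only [_root_.map_mul, map_sub, map_ofNat, conj0, conj3, conj21] at h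
        linear_combination h
      have hq1z : q1 = 0 := by
        have h : (q0 - q3) * q1 = 0 := by
          linear_combination (-(q0-q3)) * S01 + (starRingEnd ℂ) c0 * e1 + c3 * e2c +
            2*q1*(starRingEnd ℂ) c0 * htC' - (q0-q3)*q1 * htQ'
        rcases mul_eq_zero.mp h with h | h
        · exact absurd h hdne
        · exact h
      have hq2z : q2 = 0 := by rw [← conj12, hq1z, map_zero]
      have hc1z : c1 = 0 := by
        have h : (q0 - q3) * c1 = 0 := by rw [e1, hq1z]; ring
        rcases mul_eq_zero.mp h with h | h
        · exact absurd h hdne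
        · exact h
      have hc2z : c2 = 0 := by
        have h : (q0 - q3) * c2 = 0 := by rw [e2, hq2z]; ring
        rcases mul_eq_zero.mp h with h | h
        · exact absurd h hdne
        · exact h
      have hA : (starRingEnd ℂ) c0 * c0 = q0 * q0 := by
        rw [hc2z] at S00; rw [hq1z] at S00; simpa using S00
      have hB : (starRingEnd ℂ) c0 * c0 = q3 * q3 := by
        have hc3 : c3 = -c0 := by linear_combination htC'
        rw [hc1z, hc3] at S11; rw [hq1z] at S11
        simp only [map_neg, map_zero] at S11
        linear_combination S11
      have : (q0 - q3) * (q0 + q3) = 0 := by linear_combination hB - hA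
      rw [htQ'] at this
      simp at this
      exact hdne this
  obtain ⟨hq1z, hq03⟩ := key
  have hq0v : q0 = 1/2 := by linear_combination (htQ' + hq03)/2
  have hq3v : q3 = 1/2 := by linear_combination (htQ' - hq03)/2
  have hq2z : q2 = 0 := by rw [← conj12, hq1z, map_zero]
  ext i j
  fin_cases i <;> fin_cases j <;>
    simp [Matrix.one_apply, ← hq0, ← hq1, ← hq2, ← hq3, hq0v, hq1z, hq2z, hq3v]


lemma factor_main (v : Fin 2 × Fin 2 → ℂ) (a' b' : Fin 2 → ℂ)
    (hv : ∀ p, v p = a' p.1 * b' p.2)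
    (ha : a' 0 ≠ 0 ∨ a' 1 ≠ 0)
    (hnorm : ∑ p, v p * (starRingEnd ℂ) (v p) = 2) :
    ∃ a b : Fin 2 → ℂ, UnitVec a ∧ UnitVec b ∧
      proj4 v = (2 : ℂ) • (proj2 a ⊗ₖ proj2 b) := by
  set rA : ℝ := Complex.normSq (a' 0) + Complex.normSq (a' 1) with hrA
  have hrApos : 0 < rA := by
    rcases ha with h | h
    · have := Complex.normSq_pos.mpr h
      have := Complex.normSq_nonneg (a' 1)
      dsimp [rA]; linarith
    · have := Complex.normSq_pos.mpr h
      have := Complex.normSq_nonneg (a' 0)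
      dsimp [rA]; linarith
  set s : ℝ := Real.sqrt rA with hs
  have hspos : 0 < s := Real.sqrt_pos.mpr hrApos
  have hsne : (s : ℂ) ≠ 0 := by exact_mod_cast hspos.ne'
  have hs2 : (s : ℂ) * (s : ℂ) = (rA : ℂ) := by
    rw [← Complex.ofReal_mul, Real.mul_self_sqrt hrApos.le]
  have halpha : ∑ i, a' i * (starRingEnd ℂ) (a' i) = (rA : ℂ) := by
    simp [Fin.sum_univ_two, Complex.mul_conj, hrA]
  have hprod : (∑ i, a' i * (starRingEnd ℂ) (a' i)) * (∑ j, b' j * (starRingEnd ℂ) (b' j)) = 2 := by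
    rw [← hnorm, Fintype.sum_prod_type]
    simp only [hv, _root_.map_mul, Fin.sum_univ_two]
    ring
  have hbeta : (rA : ℂ) * (∑ j, b' j * (starRingEnd ℂ) (b' j)) = 2 := by
    rw [← halpha]; exact hprod
  have hsqrt2 : ((Real.sqrt 2 : ℝ) : ℂ) * ((Real.sqrt 2 : ℝ) : ℂ) = 2 := by
    rw [← Complex.ofReal_mul, Real.mul_self_sqrt (by norm_num)]
    norm_num
  have hsqrt2sq : ((Real.sqrt 2 : ℝ) : ℂ)^2 = 2 := by rw [sq]; exact hsqrt2
  have hsqrt2ne : ((Real.sqrt 2 : ℝ) : ℂ) ≠ 0 := by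
    intro h; rw [h] at hsqrt2; simp at hsqrt2
  have hssq : (s : ℂ)^2 = (rA : ℂ) := by rw [sq]; exact hs2
  have hrAne : (rA : ℂ) ≠ 0 := by exact_mod_cast hrApos.ne'
  refine ⟨fun i => (s : ℂ)⁻¹ * a' i, fun j => (s : ℂ) * ((Real.sqrt 2 : ℝ) : ℂ)⁻¹ * b' j, ?_, ?_, ?_⟩
  · unfold UnitVec
    simp only [RCLike.star_def, _root_.map_mul, map_inv₀, Complex.conj_ofReal]
    rw [Fin.sum_univ_two] at halpha ⊢
    field_simp
    linear_combination halpha - hs2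
  · unfold UnitVec
    simp only [RCLike.star_def, _root_.map_mul, map_inv₀, Complex.conj_ofReal]
    rw [Fin.sum_univ_two] at hbeta ⊢
    have expand : (↑s * (↑(Real.sqrt 2):ℂ)⁻¹ * b' 0) * (↑s * (↑(Real.sqrt 2):ℂ)⁻¹ * (starRingEnd ℂ) (b' 0)) + (↑s * (↑(Real.sqrt 2):ℂ)⁻¹ * b' 1) * (↑s * (↑(Real.sqrt 2):ℂ)⁻¹ * (starRingEnd ℂ) (b' 1)) = ((↑s * ↑s) * ((↑(Real.sqrt 2):ℂ) * (↑(Real.sqrt 2):ℂ))⁻¹) * (b' 0 * (starRingEnd ℂ) (b' 0) + b' 1 * (starRingEnd ℂ) (b' 1)) := by ring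
    rw [expand, hsqrt2, hs2]
    linear_combination hbeta / 2
  · ext ⟨i, j⟩ ⟨k, l⟩
    simp only [proj4, proj2, Matrix.of_apply, Matrix.smul_apply, kroneckerMap_apply,
      smul_eq_mul, hv, RCLike.star_def, _root_.map_mul, map_inv₀, Complex.conj_ofReal]
    field_simp
    rw [hsqrt2sq]

lemma factor (v : Fin 2 × Fin 2 → ℂ)
    (hD : v ((0 : Fin 2), (0 : Fin 2)) * v ((1 : Fin 2), (1 : Fin 2)) = v ((0 : Fin 2), (1 : Fin 2)) * v ((1 : Fin 2), (0 : Fin 2)))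
    (hnorm : ∑ p, v p * (starRingEnd ℂ) (v p) = 2) :
    ∃ a b : Fin 2 → ℂ, UnitVec a ∧ UnitVec b ∧
      proj4 v = (2 : ℂ) • (proj2 a ⊗ₖ proj2 b) := by
  have hne : ∃ p, v p ≠ 0 := by
    by_contra h
    push_neg at h
    rw [Fintype.sum_eq_zero _ (fun p => by rw [h p]; ring)] at hnorm
    norm_num at hnorm
  obtain ⟨⟨i0, j0⟩, hp⟩ := hne
  fin_cases i0 <;> fin_cases j0
  · have hp' : v ((0 : Fin 2), (0 : Fin 2)) ≠ 0 := by simpa using hp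
    refine factor_main v (fun i => v (i, (0 : Fin 2))) (fun j => v ((0 : Fin 2), j) / v ((0 : Fin 2), (0 : Fin 2))) ?_ (Or.inl hp') hnorm
    rintro ⟨i, j⟩
    fin_cases i <;> fin_cases j <;>
      simp only [mul_div_assoc'] <;> rw [eq_div_iff hp'] <;>
      (try simp only [Fin.mk_zero, Fin.mk_one, ← Prod.mk_one_one, ← Prod.mk_zero_zero]) <;>
      first | rfl | (exact mul_comm _ _) | (rw [mul_comm, hD, mul_comm]) |
        (rw [mul_comm, ← hD, mul_comm]) | (rw [mul_comm]; exact hD) |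
        (rw [mul_comm]; exact hD.symm) | exact hD | exact hD.symm
  · have hp' : v ((0 : Fin 2), (1 : Fin 2)) ≠ 0 := by simpa using hp
    refine factor_main v (fun i => v (i, (1 : Fin 2))) (fun j => v ((0 : Fin 2), j) / v ((0 : Fin 2), (1 : Fin 2))) ?_ (Or.inl hp') hnorm
    rintro ⟨i, j⟩
    fin_cases i <;> fin_cases j <;>
      simp only [mul_div_assoc'] <;> rw [eq_div_iff hp'] <;>
      (try simp only [Fin.mk_zero, Fin.mk_one, ← Prod.mk_one_one, ← Prod.mk_zero_zero]) <;>
      first | rfl | (exact mul_comm _ _) | (rw [mul_comm, hD, mul_comm]) |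
        (rw [mul_comm, ← hD, mul_comm]) | (rw [mul_comm]; exact hD) |
        (rw [mul_comm]; exact hD.symm) | exact hD | exact hD.symm
  · have hp' : v ((1 : Fin 2), (0 : Fin 2)) ≠ 0 := by simpa using hp
    refine factor_main v (fun i => v (i, (0 : Fin 2))) (fun j => v ((1 : Fin 2), j) / v ((1 : Fin 2), (0 : Fin 2))) ?_ (Or.inr hp') hnorm
    rintro ⟨i, j⟩
    fin_cases i <;> fin_cases j <;>
      simp only [mul_div_assoc'] <;> rw [eq_div_iff hp'] <;>
      (try simp only [Fin.mk_zero, Fin.mk_one, ← Prod.mk_one_one, ← Prod.mk_zero_zero]) <;>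
      first | rfl | (exact mul_comm _ _) | (rw [mul_comm, hD, mul_comm]) |
        (rw [mul_comm, ← hD, mul_comm]) | (rw [mul_comm]; exact hD) |
        (rw [mul_comm]; exact hD.symm) | exact hD | exact hD.symm
  · have hp' : v ((1 : Fin 2), (1 : Fin 2)) ≠ 0 := by simpa using hp
    refine factor_main v (fun i => v (i, (1 : Fin 2))) (fun j => v ((1 : Fin 2), j) / v ((1 : Fin 2), (1 : Fin 2))) ?_ (Or.inr hp') hnorm
    rintro ⟨i, j⟩
    fin_cases i <;> fin_cases j <;>
      simp only [mul_div_assoc'] <;> rw [eq_div_iff hp'] <;>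
      (try simp only [Fin.mk_zero, Fin.mk_one, ← Prod.mk_one_one, ← Prod.mk_zero_zero]) <;>
      first | rfl | (exact mul_comm _ _) | (rw [mul_comm, hD, mul_comm]) |
        (rw [mul_comm, ← hD, mul_comm]) | (rw [mul_comm]; exact hD) |
        (rw [mul_comm]; exact hD.symm) | exact hD | exact hD.symm


/-- the equal masked mixture (p = 1/2) of two orthogonal masked pure
states is separable. -/
theorem equal_masked_mixture_of_orthogonal_states_separable
    (χ₁ χ₂ : Fin 2 × Fin 2 → ℂ)
    (h₁ : UnitVec χ₁) (h₂ : UnitVec χ₂)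
    (horth : inner4 χ₁ χ₂ = 0)
    (hmask1 : ptr1 (proj4 χ₁) = ptr1 (proj4 χ₂))
    (hmask2 : ptr2 (proj4 χ₁) = ptr2 (proj4 χ₂)) :
    Separable4 (mix χ₁ χ₂ (1/2)) := by
  set M : Matrix (Fin 2) (Fin 2) ℂ := Matrix.of (fun i j => χ₁ (i, j)) with hMdef
  set N : Matrix (Fin 2) (Fin 2) ℂ := Matrix.of (fun i j => χ₂ (i, j)) with hNdef
  -- matrix-level translations of hypotheses
  have hPP : M * Mᴴ = N * Nᴴ := by
    ext i k
    have h := congrFun (congrFun hmask2 i) k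
    simpa [ptr2, proj4, Matrix.mul_apply, conjTranspose_apply, Fin.sum_univ_two,
      hMdef, hNdef, RCLike.star_def] using h
  have hQQ : Mᴴ * M = Nᴴ * N := by
    ext j l
    have h := congrArg (starRingEnd ℂ) (congrFun (congrFun hmask1 j) l)
    simpa [ptr1, proj4, Matrix.mul_apply, conjTranspose_apply, Fin.sum_univ_two,
      hMdef, hNdef, RCLike.star_def, map_add, _root_.map_mul, Complex.conj_conj] using h
  have htrC : (Mᴴ * N).trace = 0 := by
    have h := horth
    simp only [inner4, Fintype.sum_prod_type, Fin.sum_univ_two, RCLike.star_def] at h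
    simp only [Matrix.trace_fin_two, Matrix.mul_apply, conjTranspose_apply, Fin.sum_univ_two,
      hMdef, hNdef, Matrix.of_apply, RCLike.star_def]
    linear_combination h
  have htrQ : (Mᴴ * M).trace = 1 := by
    have h := h₁
    simp only [UnitVec, Fintype.sum_prod_type, Fin.sum_univ_two, RCLike.star_def] at h
    simp only [Matrix.trace_fin_two, Matrix.mul_apply, conjTranspose_apply, Fin.sum_univ_two,
      hMdef, hNdef, Matrix.of_apply, RCLike.star_def]
    linear_combination h
  have hQherm : (Mᴴ * M)ᴴ = Mᴴ * M := by
    rw [conjTranspose_mul, conjTranspose_conjTranspose]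
  have hcomm : (Mᴴ * N) * (Mᴴ * M) = (Mᴴ * M) * (Mᴴ * N) := by
    calc (Mᴴ * N) * (Mᴴ * M) = (Mᴴ * N) * (Nᴴ * N) := by rw [hQQ]
      _ = Mᴴ * (N * Nᴴ) * N := by simp only [Matrix.mul_assoc]
      _ = Mᴴ * (M * Mᴴ) * N := by rw [hPP]
      _ = (Mᴴ * M) * (Mᴴ * N) := by simp only [Matrix.mul_assoc]
  have hCC : (Mᴴ * N)ᴴ * (Mᴴ * N) = (Mᴴ * M) * (Mᴴ * M) := by
    calc (Mᴴ * N)ᴴ * (Mᴴ * N) = (Nᴴ * M) * (Mᴴ * N) := by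
          rw [conjTranspose_mul, conjTranspose_conjTranspose]
      _ = Nᴴ * (M * Mᴴ) * N := by simp only [Matrix.mul_assoc]
      _ = Nᴴ * (N * Nᴴ) * N := by rw [hPP]
      _ = (Nᴴ * N) * (Nᴴ * N) := by simp only [Matrix.mul_assoc]
      _ = (Mᴴ * M) * (Mᴴ * M) := by rw [hQQ]
  have hQM : Mᴴ * M = (1/2 : ℂ) • 1 := Qhalf (Mᴴ * M) (Mᴴ * N) hQherm htrQ htrC hcomm hCC
  have hQN : Nᴴ * N = (1/2 : ℂ) • 1 := by rw [← hQQ]; exact hQM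
  -- determinants
  set Da : ℂ := χ₁ ((0 : Fin 2), (0 : Fin 2)) * χ₁ ((1 : Fin 2), (1 : Fin 2)) -
      χ₁ ((0 : Fin 2), (1 : Fin 2)) * χ₁ ((1 : Fin 2), (0 : Fin 2)) with hDadef
  set Db : ℂ := χ₂ ((0 : Fin 2), (0 : Fin 2)) * χ₂ ((1 : Fin 2), (1 : Fin 2)) -
      χ₂ ((0 : Fin 2), (1 : Fin 2)) * χ₂ ((1 : Fin 2), (0 : Fin 2)) with hDbdef
  have hdetM : M.det = Da := by simp [hMdef, Matrix.det_fin_two, hDadef]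
  have hdetN : N.det = Db := by simp [hNdef, Matrix.det_fin_two, hDbdef]
  have hDa4 : (starRingEnd ℂ) Da * Da = 1/4 := by
    have h := congrArg Matrix.det hQM
    rw [Matrix.det_mul, Matrix.det_conjTranspose, hdetM] at h
    simp only [Matrix.det_smul, Matrix.det_one, Fintype.card_fin, RCLike.star_def] at h
    rw [h]; norm_num
  have hDb4 : (starRingEnd ℂ) Db * Db = 1/4 := by
    have h := congrArg Matrix.det hQN
    rw [Matrix.det_mul, Matrix.det_conjTranspose, hdetN] at h
    simp only [Matrix.det_smul, Matrix.det_one, Fintype.card_fin, RCLike.star_def] at h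
    rw [h]; norm_num
  have hDbne : Db ≠ 0 := by
    intro h
    rw [h, mul_zero] at hDb4
    norm_num at hDb4
  -- choose the phase z
  obtain ⟨z, hz⟩ := IsAlgClosed.exists_pow_nat_eq (k := ℂ) (-(Da/Db)) (n := 2) (by norm_num)
  have hz2 : z * z * Db = -Da := by
    rw [pow_two] at hz
    rw [hz]
    field_simp
  have hz2c : (starRingEnd ℂ) z * (starRingEnd ℂ) z * (starRingEnd ℂ) Db
      = -(starRingEnd ℂ) Da := by
    have := congrArg (starRingEnd ℂ) hz2
    simpa [_root_.map_mul, map_neg] using this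
  have hzz : z * (starRingEnd ℂ) z = 1 := by
    have hstep : (z * (starRingEnd ℂ) z)^2 * ((starRingEnd ℂ) Db * Db)
        = (starRingEnd ℂ) Da * Da := by
      linear_combination ((starRingEnd ℂ) z * (starRingEnd ℂ) z * (starRingEnd ℂ) Db) * hz2 +
        (-Da) * hz2c
    rw [hDb4, hDa4] at hstep
    have h1 : (z * (starRingEnd ℂ) z)^2 = 1 := by linear_combination 4 * hstep
    rw [Complex.mul_conj] at h1 ⊢
    have h2 : (Complex.normSq z)^2 = 1 := by exact_mod_cast h1
    have h3 : (Complex.normSq z - 1) * (Complex.normSq z + 1) = 0 := by nlinarith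
    rcases mul_eq_zero.mp h3 with h | h
    · have : Complex.normSq z = 1 := by linarith
      rw [this]; norm_num
    · have := Complex.normSq_nonneg z
      linarith
  -- scalar consequences
  have hF1 : (starRingEnd ℂ) (χ₂ ((0:Fin 2), (0:Fin 2))) * χ₂ ((0:Fin 2), (0:Fin 2)) +
      (starRingEnd ℂ) (χ₂ ((1:Fin 2), (0:Fin 2))) * χ₂ ((1:Fin 2), (0:Fin 2)) = 1/2 := by
    have h := congrFun (congrFun hQN 0) 0
    simpa [Matrix.mul_apply, conjTranspose_apply, Fin.sum_univ_two, hNdef,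
      Matrix.one_apply, RCLike.star_def] using h
  have hF2 : (starRingEnd ℂ) (χ₂ ((0:Fin 2), (0:Fin 2))) * χ₂ ((0:Fin 2), (1:Fin 2)) +
      (starRingEnd ℂ) (χ₂ ((1:Fin 2), (0:Fin 2))) * χ₂ ((1:Fin 2), (1:Fin 2)) = 0 := by
    have h := congrFun (congrFun hQN 0) 1
    simpa [Matrix.mul_apply, conjTranspose_apply, Fin.sum_univ_two, hNdef,
      Matrix.one_apply, RCLike.star_def] using h
  have hF3 : (starRingEnd ℂ) (χ₂ ((0:Fin 2), (1:Fin 2))) * χ₂ ((0:Fin 2), (0:Fin 2)) +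
      (starRingEnd ℂ) (χ₂ ((1:Fin 2), (1:Fin 2))) * χ₂ ((1:Fin 2), (0:Fin 2)) = 0 := by
    have h := congrFun (congrFun hQN 1) 0
    simpa [Matrix.mul_apply, conjTranspose_apply, Fin.sum_univ_two, hNdef,
      Matrix.one_apply, RCLike.star_def] using h
  have hF4 : (starRingEnd ℂ) (χ₂ ((0:Fin 2), (1:Fin 2))) * χ₂ ((0:Fin 2), (1:Fin 2)) +
      (starRingEnd ℂ) (χ₂ ((1:Fin 2), (1:Fin 2))) * χ₂ ((1:Fin 2), (1:Fin 2)) = 1/2 := by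
    have h := congrFun (congrFun hQN 1) 1
    simpa [Matrix.mul_apply, conjTranspose_apply, Fin.sum_univ_two, hNdef,
      Matrix.one_apply, RCLike.star_def] using h
  have horths : (starRingEnd ℂ) (χ₁ ((0:Fin 2), (0:Fin 2))) * χ₂ ((0:Fin 2), (0:Fin 2)) +
      (starRingEnd ℂ) (χ₁ ((0:Fin 2), (1:Fin 2))) * χ₂ ((0:Fin 2), (1:Fin 2)) +
      (starRingEnd ℂ) (χ₁ ((1:Fin 2), (0:Fin 2))) * χ₂ ((1:Fin 2), (0:Fin 2)) +
      (starRingEnd ℂ) (χ₁ ((1:Fin 2), (1:Fin 2))) * χ₂ ((1:Fin 2), (1:Fin 2)) = 0 := by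
    have h := horth
    simp only [inner4, Fintype.sum_prod_type, Fin.sum_univ_two, RCLike.star_def] at h
    linear_combination h
  have hcorth : χ₁ ((0:Fin 2), (0:Fin 2)) * (starRingEnd ℂ) (χ₂ ((0:Fin 2), (0:Fin 2))) +
      χ₁ ((0:Fin 2), (1:Fin 2)) * (starRingEnd ℂ) (χ₂ ((0:Fin 2), (1:Fin 2))) +
      χ₁ ((1:Fin 2), (0:Fin 2)) * (starRingEnd ℂ) (χ₂ ((1:Fin 2), (0:Fin 2))) +
      χ₁ ((1:Fin 2), (1:Fin 2)) * (starRingEnd ℂ) (χ₂ ((1:Fin 2), (1:Fin 2))) = 0 := by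
    have h := congrArg (starRingEnd ℂ) horths
    simpa [map_add, _root_.map_mul, Complex.conj_conj] using h
  have h1s : χ₁ ((0:Fin 2), (0:Fin 2)) * (starRingEnd ℂ) (χ₁ ((0:Fin 2), (0:Fin 2))) +
      χ₁ ((0:Fin 2), (1:Fin 2)) * (starRingEnd ℂ) (χ₁ ((0:Fin 2), (1:Fin 2))) +
      χ₁ ((1:Fin 2), (0:Fin 2)) * (starRingEnd ℂ) (χ₁ ((1:Fin 2), (0:Fin 2))) +
      χ₁ ((1:Fin 2), (1:Fin 2)) * (starRingEnd ℂ) (χ₁ ((1:Fin 2), (1:Fin 2))) = 1 := by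
    have h := h₁
    simp only [UnitVec, Fintype.sum_prod_type, Fin.sum_univ_two, RCLike.star_def] at h
    linear_combination h
  have h2s : χ₂ ((0:Fin 2), (0:Fin 2)) * (starRingEnd ℂ) (χ₂ ((0:Fin 2), (0:Fin 2))) +
      χ₂ ((0:Fin 2), (1:Fin 2)) * (starRingEnd ℂ) (χ₂ ((0:Fin 2), (1:Fin 2))) +
      χ₂ ((1:Fin 2), (0:Fin 2)) * (starRingEnd ℂ) (χ₂ ((1:Fin 2), (0:Fin 2))) +
      χ₂ ((1:Fin 2), (1:Fin 2)) * (starRingEnd ℂ) (χ₂ ((1:Fin 2), (1:Fin 2))) = 1 := by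
    have h := h₂
    simp only [UnitVec, Fintype.sum_prod_type, Fin.sum_univ_two, RCLike.star_def] at h
    linear_combination h
  -- the bilinear term vanishes
  have hB : χ₁ ((0:Fin 2), (0:Fin 2)) * χ₂ ((1:Fin 2), (1:Fin 2)) +
      χ₁ ((1:Fin 2), (1:Fin 2)) * χ₂ ((0:Fin 2), (0:Fin 2)) -
      χ₁ ((0:Fin 2), (1:Fin 2)) * χ₂ ((1:Fin 2), (0:Fin 2)) -
      χ₁ ((1:Fin 2), (0:Fin 2)) * χ₂ ((0:Fin 2), (1:Fin 2)) = 0 := by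
    linear_combination (2 * Db) * hcorth +
      (-2 * χ₁ ((0:Fin 2), (0:Fin 2)) * χ₂ ((1:Fin 2), (1:Fin 2)) +
        2 * χ₁ ((1:Fin 2), (0:Fin 2)) * χ₂ ((0:Fin 2), (1:Fin 2))) * hF1 +
      (2 * χ₁ ((0:Fin 2), (0:Fin 2)) * χ₂ ((1:Fin 2), (0:Fin 2)) -
        2 * χ₁ ((1:Fin 2), (0:Fin 2)) * χ₂ ((0:Fin 2), (0:Fin 2))) * hF2 +
      (2 * χ₁ ((1:Fin 2), (1:Fin 2)) * χ₂ ((0:Fin 2), (1:Fin 2)) -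
        2 * χ₁ ((0:Fin 2), (1:Fin 2)) * χ₂ ((1:Fin 2), (1:Fin 2))) * hF3 +
      (-2 * χ₁ ((1:Fin 2), (1:Fin 2)) * χ₂ ((0:Fin 2), (0:Fin 2)) +
        2 * χ₁ ((0:Fin 2), (1:Fin 2)) * χ₂ ((1:Fin 2), (0:Fin 2))) * hF4
  -- the two product vectors
  set u : Fin 2 × Fin 2 → ℂ := fun p => χ₁ p + z * χ₂ p with hudef
  set v : Fin 2 × Fin 2 → ℂ := fun p => χ₁ p - z * χ₂ p with hvdef
  have hDu : u ((0 : Fin 2), (0 : Fin 2)) * u ((1 : Fin 2), (1 : Fin 2)) =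
      u ((0 : Fin 2), (1 : Fin 2)) * u ((1 : Fin 2), (0 : Fin 2)) := by
    simp only [hudef]
    linear_combination z * hB + hz2
  have hDv : v ((0 : Fin 2), (0 : Fin 2)) * v ((1 : Fin 2), (1 : Fin 2)) =
      v ((0 : Fin 2), (1 : Fin 2)) * v ((1 : Fin 2), (0 : Fin 2)) := by
    simp only [hvdef]
    linear_combination (-z) * hB + hz2
  have hnormu : ∑ p, u p * (starRingEnd ℂ) (u p) = 2 := by
    simp only [hudef, Fintype.sum_prod_type, Fin.sum_univ_two, map_add, _root_.map_mul]
    linear_combination h1s + (starRingEnd ℂ) z * hcorth + z * horths +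
      (χ₂ ((0:Fin 2), (0:Fin 2)) * (starRingEnd ℂ) (χ₂ ((0:Fin 2), (0:Fin 2))) +
       χ₂ ((0:Fin 2), (1:Fin 2)) * (starRingEnd ℂ) (χ₂ ((0:Fin 2), (1:Fin 2))) +
       χ₂ ((1:Fin 2), (0:Fin 2)) * (starRingEnd ℂ) (χ₂ ((1:Fin 2), (0:Fin 2))) +
       χ₂ ((1:Fin 2), (1:Fin 2)) * (starRingEnd ℂ) (χ₂ ((1:Fin 2), (1:Fin 2)))) * hzz + h2s
  have hnormv : ∑ p, v p * (starRingEnd ℂ) (v p) = 2 := by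
    simp only [hvdef, Fintype.sum_prod_type, Fin.sum_univ_two, map_sub, map_add, _root_.map_mul]
    linear_combination h1s - (starRingEnd ℂ) z * hcorth - z * horths +
      (χ₂ ((0:Fin 2), (0:Fin 2)) * (starRingEnd ℂ) (χ₂ ((0:Fin 2), (0:Fin 2))) +
       χ₂ ((0:Fin 2), (1:Fin 2)) * (starRingEnd ℂ) (χ₂ ((0:Fin 2), (1:Fin 2))) +
       χ₂ ((1:Fin 2), (0:Fin 2)) * (starRingEnd ℂ) (χ₂ ((1:Fin 2), (0:Fin 2))) +
       χ₂ ((1:Fin 2), (1:Fin 2)) * (starRingEnd ℂ) (χ₂ ((1:Fin 2), (1:Fin 2)))) * hzz + h2s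
  obtain ⟨a, b, hua, hub, hprojU⟩ := factor u hDu hnormu
  obtain ⟨a', b', hva, hvb, hprojV⟩ := factor v hDv hnormv
  refine ⟨2, ![1/2, 1/2], ![proj2 a, proj2 a'], ![proj2 b, proj2 b'], ?_, ?_, ?_, ?_, ?_⟩
  · intro i; fin_cases i <;> norm_num
  · norm_num [Fin.sum_univ_two]
  · intro i; fin_cases i
    · simpa using proj2_density a hua
    · simpa using proj2_density a' hva
  · intro i; fin_cases i
    · simpa using proj2_density b hub
    · simpa using proj2_density b' hvb
  · rw [Fin.sum_univ_two]
    simp only [Matrix.cons_val_zero, Matrix.cons_val_one, Matrix.head_cons]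
    have hU2 : proj2 a ⊗ₖ proj2 b = ((1:ℂ)/2) • proj4 u := by
      rw [hprojU, smul_smul]; norm_num
    have hV2 : proj2 a' ⊗ₖ proj2 b' = ((1:ℂ)/2) • proj4 v := by
      rw [hprojV, smul_smul]; norm_num
    rw [hU2, hV2]
    ext p q
    simp only [mix, proj4, Matrix.add_apply, Matrix.smul_apply, Matrix.of_apply, smul_eq_mul,
      hudef, hvdef, RCLike.star_def, map_add, map_sub, _root_.map_mul]
    push_cast
    linear_combination (-(1:ℂ)/2) * χ₂ p * (starRingEnd ℂ) (χ₂ q) * hzz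

end
end

section
/- Let Σ₁ and Σ₂ be unit vectors in ℂ²⊗ℂ² with ⟨Σ₁, Σ₂⟩ ≠ 0 and |Σ₁⟩⟨Σ₁| ≠ |Σ₂⟩⟨Σ₂| (the two pure states are non-orthogonal and distinct). Suppose Tr₁ |Σ₁⟩⟨Σ₁| = Tr₁ |Σ₂⟩⟨Σ₂| and Tr₂ |Σ₁⟩⟨Σ₁| = Tr₂ |Σ₂⟩⟨Σ₂|. Then the common reduced state Tr₂ |Σ₁⟩⟨Σ₁| is not a rank-one matrix; equivalently, both Σ₁ and Σ₂ are entangled pure states, and (having identical reduced states) they carry equal, nonzero entanglement. That is, masking two distinct single-qubit pure non-orthogonal states requires the masked states to be equally and nontrivially entangled. -/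
open Matrix Kronecker Polynomial ComplexOrder

noncomputable section

lemma key_prod (a b : Fin 2 → ℂ) (σ : Fin 2 × Fin 2 → ℂ) (hσ : σ = tens a b)
    (hu : UnitVec σ) (p q : Fin 2 × Fin 2) :
    proj4 σ p q = ptr2 (proj4 σ) p.1 q.1 * ptr1 (proj4 σ) p.2 q.2 := by
  subst hσ
  simp only [UnitVec, Fintype.sum_prod_type, Fin.sum_univ_two, tens, star_mul'] at hu
  simp only [proj4, ptr2, ptr1, Matrix.of_apply, Fin.sum_univ_two, tens, star_mul']
  linear_combination (-(a p.1 * b p.2 * star (a q.1) * star (b q.2))) * hu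

lemma det_ptr2 (σ : Fin 2 × Fin 2 → ℂ) :
    (ptr2 (proj4 σ)).det =
      (σ (0,0) * σ (1,1) - σ (0,1) * σ (1,0)) *
        star (σ (0,0) * σ (1,1) - σ (0,1) * σ (1,0)) := by
  simp only [Matrix.det_fin_two, ptr2, proj4, Matrix.of_apply, Fin.sum_univ_two,
    star_mul', star_sub]
  ring

lemma prod_of_det_zero (σ : Fin 2 × Fin 2 → ℂ)
    (h : σ (0,0) * σ (1,1) = σ (0,1) * σ (1,0)) :
    ∃ a b : Fin 2 → ℂ, σ = tens a b := by
  by_cases h0 : σ (0,0) = 0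
  · by_cases h1 : σ (0,1) = 0
    · refine ⟨![0,1], ![σ (1,0), σ (1,1)], ?_⟩
      funext p; obtain ⟨i,j⟩ := p
      fin_cases i <;> fin_cases j <;>
        simp only [tens, Fin.mk_zero, Fin.mk_one, Matrix.cons_val_zero, Matrix.cons_val_one,
          Matrix.head_cons, zero_mul, one_mul, mul_zero, mul_one] <;>
        first | exact h0 | exact h1 | rfl
    · have h10 : σ (1,0) = 0 := by
        have h' := h; rw [h0, zero_mul] at h'
        rcases mul_eq_zero.mp h'.symm with h'' | h''
        · exact absurd h'' h1
        · exact h''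
      refine ⟨![σ (0,1), σ (1,1)], ![0,1], ?_⟩
      funext p; obtain ⟨i,j⟩ := p
      fin_cases i <;> fin_cases j <;>
        simp only [tens, Fin.mk_zero, Fin.mk_one, Matrix.cons_val_zero, Matrix.cons_val_one,
          Matrix.head_cons, zero_mul, one_mul, mul_zero, mul_one] <;>
        first | exact h0 | exact h10 | rfl
  · have h0' : σ (0 : Fin 2 × Fin 2) ≠ 0 := h0
    have h' : σ (0 : Fin 2 × Fin 2) * σ (1 : Fin 2 × Fin 2) = σ (0,1) * σ (1,0) := h
    refine ⟨![σ (0,0), σ (1,0)], ![1, σ (0,1) / σ (0,0)], ?_⟩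
    funext p; obtain ⟨i,j⟩ := p
    fin_cases i <;> fin_cases j <;>
      simp only [tens, Fin.mk_zero, Fin.mk_one, Matrix.cons_val_zero, Matrix.cons_val_one,
        Matrix.head_cons, zero_mul, one_mul, mul_zero, mul_one] <;>
      first
        | rfl
        | (field_simp [h0']; all_goals linear_combination h')

/-- two distinct non-orthogonal pure two-qubit states that mask each
other must both be entangled: the common reduced state is not rank one (it has rank 2),
and neither state is a product vector; having identical reduced states, they carry
equal, nonzero entanglement. -/
theorem masking_nonorthogonal_states_requires_equal_nonzero_entanglement
    (σ₁ σ₂ : Fin 2 × Fin 2 → ℂ)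
    (h₁ : UnitVec σ₁) (h₂ : UnitVec σ₂)
    (hnonorth : inner4 σ₁ σ₂ ≠ 0)
    (hdist : proj4 σ₁ ≠ proj4 σ₂)
    (hmask1 : ptr1 (proj4 σ₁) = ptr1 (proj4 σ₂))
    (hmask2 : ptr2 (proj4 σ₁) = ptr2 (proj4 σ₂)) :
    (ptr2 (proj4 σ₁)).rank ≠ 1 ∧
    (ptr2 (proj4 σ₁)).rank = 2 ∧ (ptr2 (proj4 σ₂)).rank = 2 ∧
    (¬ ∃ a b : Fin 2 → ℂ, σ₁ = tens a b) ∧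
    (¬ ∃ a b : Fin 2 → ℂ, σ₂ = tens a b) := by
  have hD1 : σ₁ (0,0) * σ₁ (1,1) - σ₁ (0,1) * σ₁ (1,0) ≠ 0 := by
    intro hd
    have hz : (σ₂ (0,0) * σ₂ (1,1) - σ₂ (0,1) * σ₂ (1,0)) *
        star (σ₂ (0,0) * σ₂ (1,1) - σ₂ (0,1) * σ₂ (1,0)) = 0 := by
      rw [← det_ptr2, ← hmask2, det_ptr2, hd, zero_mul]
    have hd2 : σ₂ (0,0) * σ₂ (1,1) - σ₂ (0,1) * σ₂ (1,0) = 0 := by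
      rcases mul_eq_zero.mp hz with h' | h'
      · exact h'
      · exact star_eq_zero.mp h'
    obtain ⟨a, b, hab⟩ := prod_of_det_zero σ₁ (sub_eq_zero.mp hd)
    obtain ⟨c, d, hcd⟩ := prod_of_det_zero σ₂ (sub_eq_zero.mp hd2)
    apply hdist
    ext p q
    rw [key_prod a b σ₁ hab h₁ p q, key_prod c d σ₂ hcd h₂ p q, hmask1, hmask2]
  have hD2 : σ₂ (0,0) * σ₂ (1,1) - σ₂ (0,1) * σ₂ (1,0) ≠ 0 := by
    intro hd
    apply hD1
    have hz : (σ₁ (0,0) * σ₁ (1,1) - σ₁ (0,1) * σ₁ (1,0)) *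
        star (σ₁ (0,0) * σ₁ (1,1) - σ₁ (0,1) * σ₁ (1,0)) = 0 := by
      rw [← det_ptr2, hmask2, det_ptr2, hd, zero_mul]
    rcases mul_eq_zero.mp hz with h' | h'
    · exact h'
    · exact star_eq_zero.mp h'
  have hdet : (ptr2 (proj4 σ₁)).det ≠ 0 := by
    rw [det_ptr2]
    exact mul_ne_zero hD1 (star_ne_zero.mpr hD1)
  have hrank : (ptr2 (proj4 σ₁)).rank = 2 := by
    have := Matrix.rank_of_isUnit (ptr2 (proj4 σ₁))
      ((Matrix.isUnit_iff_isUnit_det _).mpr (isUnit_iff_ne_zero.mpr hdet))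
    simpa using this
  refine ⟨by omega, hrank, by rw [← hmask2]; exact hrank, ?_, ?_⟩
  · rintro ⟨a, b, rfl⟩
    apply hD1
    simp only [tens]
    ring
  · rintro ⟨c, d, rfl⟩
    apply hD2
    simp only [tens]
    ring

end
end
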